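/- arXiv:2212.02369 — 9 statements merged into one kernel-verified Lean document; each statement's English description precedes it below -/
import Mathlib

section
/- The triangle map preserves partition size: for any partition λ = (λ₁,...,λ_m)×[k₁,...,k_m] of n with m ≥ 2 and λ₁ < λ₂ + λ_m, the tuple T₀(λ) = (λ₂,λ₃,...,λ_m, λ₁−λ₂)×[k₁+k₂, k₃,...,k_m, k₁] is again a partition of n. -/
/-- A partition `(λ₁,...,λ_m)×[k₁,...,k_m]`: strictly decreasing positive parts
with positive multiplicities, same length. -/
def IsPart (p : List ℕ × List ℕ) : Prop :=
  p.1.length = p.2.length ∧ List.Chain' (· > ·) p.1 ∧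
  (∀ x ∈ p.1, 0 < x) ∧ (∀ x ∈ p.2, 0 < x)

/-- size of a partition: Σ kᵢ λᵢ -/
def psize (p : List ℕ × List ℕ) : ℕ := (List.zipWith (· * ·) p.1 p.2).sum

def parts1 (L : List ℕ) : ℕ := L.headD 0      -- λ₁
def parts2 (L : List ℕ) : ℕ := L.tail.headD 0 -- λ₂
def parts3 (L : List ℕ) : ℕ := L.tail.tail.headD 0 -- λ₃
def partsLast (L : List ℕ) : ℕ := L.getLastD 0 -- λ_m
def partsPrelast (L : List ℕ) : ℕ := L.dropLast.getLastD 0 -- λ_{m-1}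

def T0parts : List ℕ → List ℕ
  | a :: b :: t => b :: (t ++ [a - b])
  | l => l

def T0mults : List ℕ → List ℕ
  | a :: b :: t => (a + b) :: (t ++ [a])
  | l => l

def T1parts (L : List ℕ) : List ℕ := (parts1 L - partsLast L) :: L.tail

def T1mults (K : List ℕ) : List ℕ := K.dropLast ++ [K.headD 0 + K.getLastD 0]

def TDparts (L : List ℕ) : List ℕ := L.tail

def TDmults : List ℕ → List ℕ
  | [a, b] => [2 * a + b]
  | a :: b :: t => (a + b) :: (t.dropLast ++ [a + t.getLastD 0])
  | l => l

def T0map (p : List ℕ × List ℕ) : List ℕ × List ℕ := (T0parts p.1, T0mults p.2)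
def T1map (p : List ℕ × List ℕ) : List ℕ × List ℕ := (T1parts p.1, T1mults p.2)

/-- △₀ : partitions of dimension ≥ 2 with λ₁ < λ₂ + λ_m -/
def Tri0 : Set (List ℕ × List ℕ) :=
  {p | IsPart p ∧ 2 ≤ p.1.length ∧ parts1 p.1 < parts2 p.1 + partsLast p.1}

/-- △₁ : partitions of dimension ≥ 2 with λ₁ > λ₂ + λ_m -/
def Tri1 : Set (List ℕ × List ℕ) :=
  {p | IsPart p ∧ 2 ≤ p.1.length ∧ parts2 p.1 + partsLast p.1 < parts1 p.1}

/-- M₀ : partitions of dimension ≥ 2 with k₁ > k_m -/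
def M0 : Set (List ℕ × List ℕ) :=
  {p | IsPart p ∧ 2 ≤ p.1.length ∧ p.2.getLastD 0 < p.2.headD 0}

/-- M₁ : partitions of dimension ≥ 2 with k₁ < k_m -/
def M1 : Set (List ℕ × List ℕ) :=
  {p | IsPart p ∧ 2 ≤ p.1.length ∧ p.2.headD 0 < p.2.getLastD 0}

/-- △_d^G : partitions with λ₂ + dλ_m < λ₁ < λ₂ + (d+1)λ_m -/
def GaussSet (d : ℕ) : Set (List ℕ × List ℕ) :=
  {p | IsPart p ∧ 2 ≤ p.1.length ∧
    parts2 p.1 + d * partsLast p.1 < parts1 p.1 ∧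
    parts1 p.1 < parts2 p.1 + (d + 1) * partsLast p.1}

theorem stmt0 (n : ℕ) (L K : List ℕ) (hP : IsPart (L, K)) (hm : 2 ≤ L.length)
    (hn : psize (L, K) = n) (h0 : parts1 L < parts2 L + partsLast L) :
    IsPart (T0parts L, T0mults K) ∧ psize (T0parts L, T0mults K) = n := by
  obtain ⟨hlen, hchain, hpos1, hpos2⟩ := hP
  simp only at hlen hchain hpos1 hpos2
  match L, K, hlen with
  | a :: b :: t, c :: d :: s, hlen =>
    simp only [List.length_cons, Nat.add_right_cancel_iff] at hlen
    have hab : b < a := hchain.rel_head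
    have hchain2 : List.Chain' (· > ·) (b :: t) := hchain.tail
    have hlast : partsLast (a :: b :: t) = (b :: t).getLast (by simp) := by
      simp [partsLast, List.getLastD_eq_getLast?, List.getLast?_eq_getLast]
    rw [hlast] at h0
    simp only [parts1, parts2, List.headD_cons, List.tail_cons] at h0
    have hlastgt : a - b < (b :: t).getLast (by simp) := by omega
    constructor
    · refine ⟨?_, ?_, ?_, ?_⟩
      · simp [T0parts, T0mults, hlen]
      · show List.Chain' (· > ·) ((b :: t) ++ [a - b])
        unfold List.Chain'
        rw [List.isChain_append]
        refine ⟨hchain2, List.isChain_singleton _, ?_⟩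
        intro x hx y hy
        simp only [List.head?_cons, Option.mem_def, Option.some.injEq] at hy
        rw [List.getLast?_eq_getLast (by simp)] at hx
        simp only [Option.mem_def, Option.some.injEq] at hx
        subst hx; subst hy
        exact hlastgt
      · intro x hx
        have hb : 0 < b := hpos1 b (by simp)
        simp only [T0parts, List.mem_cons, List.mem_append] at hx
        rcases hx with h | h | h
        · omega
        · exact hpos1 x (by simp [h])
        · simp only [List.not_mem_nil, or_false] at h; omega
      · intro x hx
        have hc : 0 < c := hpos2 c (by simp)
        have hd : 0 < d := hpos2 d (by simp)
        simp only [T0mults, List.mem_cons, List.mem_append] at hx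
        rcases hx with h | h | h
        · omega
        · exact hpos2 x (by simp [h])
        · simp only [List.not_mem_nil, or_false] at h; omega
    · rw [← hn]
      simp only [psize, T0parts, T0mults, List.zipWith_cons_cons,
        List.zipWith_append hlen, List.sum_cons, List.sum_append,
        List.zipWith_cons_cons, List.zipWith_nil_right, List.sum_nil,
        List.sum_cons]
      have h2 : b * c ≤ a * c := Nat.mul_le_mul_right c hab.le
      rw [Nat.mul_add, Nat.sub_mul]
      omega
end

section
/- The map T₀ is a bijection from △₀ (partitions of dimension ≥ 2 with λ₁ < λ₂ + λ_m) onto M₀ (partitions of dimension ≥ 2 with k₁ > k_m), and this bijection preserves the size of the partition. -/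
theorem List.chain'_cons {α : Type*} {R : α → α → Prop} {a b : α} {l : List α} :
    List.Chain' R (a :: b :: l) ↔ R a b ∧ List.Chain' R (b :: l) := List.isChain_cons_cons

namespace T0proof

/-- explicit inverse of T0 -/
def Invmap (p : List ℕ × List ℕ) : List ℕ × List ℕ :=
  ((parts1 p.1 + partsLast p.1) :: p.1.dropLast,
   p.2.getLastD 0 :: (p.2.headD 0 - p.2.getLastD 0) :: p.2.tail.dropLast)

lemma getLastD_mem : ∀ (l : List ℕ) (d : ℕ), l ≠ [] → l.getLastD d ∈ l
  | y :: t, d, _ => by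
    rw [List.getLastD_cons]
    exact List.getLastD_mem_cons (l := t) (a := y)

lemma dropLast_concat_getLastD (l : List ℕ) (d : ℕ) (h : l ≠ []) :
    l.dropLast ++ [l.getLastD d] = l := by
  obtain ⟨t, a, rfl⟩ := (List.eq_nil_or_concat l).resolve_left h
  simp [List.getLastD_concat]

lemma chain_concat : ∀ (l : List ℕ) (x c : ℕ), List.Chain' (· > ·) (x :: l) →
    c < l.getLastD x → List.Chain' (· > ·) (x :: (l ++ [c]))
  | [], x, c, _, h2 => by
    simp only [List.getLastD_nil] at h2
    simp [List.chain'_cons, h2, List.Chain']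
  | y :: t, x, c, h1, h2 => by
    rw [List.chain'_cons] at h1
    rw [List.getLastD_cons] at h2
    rw [List.cons_append, List.chain'_cons]
    exact ⟨h1.1, chain_concat t y c h1.2 h2⟩

lemma key : ∀ (l : List ℕ) (x : ℕ), List.Chain' (· > ·) (x :: l) → l ≠ [] →
    l.getLastD 0 < l.dropLast.getLastD x
  | [y], x, h, _ => by
    rw [List.chain'_cons] at h
    simpa using h.1
  | y :: z :: t, x, h, _ => by
    rw [List.chain'_cons] at h
    have ih := key (z :: t) y h.2 (by simp)
    rw [List.getLastD_cons, List.getLastD_cons, List.dropLast_cons₂,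
      List.getLastD_cons]
    rwa [List.getLastD_cons] at ih

lemma destruct (p : List ℕ × List ℕ) (h : IsPart p) (h2 : 2 ≤ p.1.length) :
    ∃ a b t k1 k2 s, p = (a :: b :: t, k1 :: k2 :: s) := by
  obtain ⟨L, K⟩ := p
  have hlen : L.length = K.length := h.1
  rcases L with _ | ⟨a, _ | ⟨b, t⟩⟩ <;> simp at h2
  rcases K with _ | ⟨k1, _ | ⟨k2, s⟩⟩ <;> simp at hlen
  exact ⟨a, b, t, k1, k2, s, rfl⟩

lemma mem_fwd : ∀ p ∈ Tri0, T0map p ∈ M0 := by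
  intro p hp
  obtain ⟨a, b, t, k1, k2, s, rfl⟩ := destruct p hp.1 hp.2.1
  obtain ⟨⟨hlen, hch, hpos1, hpos2⟩, hdim, hlt⟩ := hp
  replace hlen : (a :: b :: t).length = (k1 :: k2 :: s).length := hlen
  replace hch : List.Chain' (· > ·) (a :: b :: t) := hch
  replace hpos1 : ∀ x ∈ a :: b :: t, 0 < x := hpos1
  replace hpos2 : ∀ x ∈ k1 :: k2 :: s, 0 < x := hpos2
  simp only [parts1, parts2, partsLast, List.headD_cons, List.tail_cons,
    List.getLastD_cons] at hlt
  rw [List.chain'_cons] at hch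
  refine ⟨⟨?_, ?_, ?_, ?_⟩, ?_, ?_⟩
  · simp only [T0map, T0parts, T0mults]
    simp at hlen ⊢
    omega
  · simp only [T0map, T0parts]
    exact chain_concat t b (a - b) hch.2 (by omega)
  · simp only [T0map, T0parts]
    intro x hx
    simp at hx
    rcases hx with rfl | hx | rfl
    · exact hpos1 x (by simp)
    · exact hpos1 x (by simp [hx])
    · omega
  · simp only [T0map, T0mults]
    intro x hx
    simp at hx
    have h1 : 0 < k1 := hpos2 k1 (by simp)
    have h2 : 0 < k2 := hpos2 k2 (by simp)
    rcases hx with rfl | hx | rfl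
    · omega
    · exact hpos2 x (by simp [hx])
    · exact h1
  · simp [T0map, T0parts]
  · have h2 : 0 < k2 := hpos2 k2 (by simp)
    simp only [T0map, T0mults, List.getLastD_cons, List.getLastD_concat,
      List.headD_cons]
    omega

lemma inv_left : ∀ p ∈ Tri0, Invmap (T0map p) = p := by
  intro p hp
  obtain ⟨a, b, t, k1, k2, s, rfl⟩ := destruct p hp.1 hp.2.1
  have hab : b < a := (List.chain'_cons.mp hp.1.2.1).1
  simp only [T0map, T0parts, T0mults, Invmap, parts1, partsLast,
    List.headD_cons, List.getLastD_cons, List.getLastD_concat, List.tail_cons,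
    Prod.mk.injEq]
  have h1 : (b :: (t ++ [a - b])).dropLast = b :: t := by
    rw [show b :: (t ++ [a - b]) = (b :: t) ++ [a - b] by simp,
      List.dropLast_concat]
  have h2 : (s ++ [k1]).dropLast = s := List.dropLast_concat
  have h3 : b + (a - b) = a := by omega
  have h4 : k1 + k2 - k1 = k2 := by omega
  rw [h1, h2, h3, h4]
  exact ⟨rfl, rfl⟩

lemma inv_mem : ∀ q ∈ M0, Invmap q ∈ Tri0 := by
  intro q hq
  obtain ⟨a, b, t, k1, k2, s, rfl⟩ := destruct q hq.1 hq.2.1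
  obtain ⟨⟨hlen, hch, hpos1, hpos2⟩, hdim, hlt⟩ := hq
  replace hlen : (a :: b :: t).length = (k1 :: k2 :: s).length := hlen
  replace hch : List.Chain' (· > ·) (a :: b :: t) := hch
  replace hpos1 : ∀ x ∈ a :: b :: t, 0 < x := hpos1
  replace hpos2 : ∀ x ∈ k1 :: k2 :: s, 0 < x := hpos2
  simp only [List.getLastD_cons, List.headD_cons] at hlt
  have hz : t.getLastD b ∈ a :: b :: t :=
    List.mem_cons_of_mem a (List.getLastD_mem_cons (l := t) (a := b))
  have hzpos : 0 < t.getLastD b := hpos1 _ hz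
  have hz2 : s.getLastD k2 ∈ k1 :: k2 :: s :=
    List.mem_cons_of_mem k1 (List.getLastD_mem_cons (l := s) (a := k2))
  have hz2' : 0 < s.getLastD k2 := hpos2 _ hz2
  refine ⟨⟨?_, ?_, ?_, ?_⟩, ?_, ?_⟩
  · simp only [Invmap, List.tail_cons]
    simp at hlen ⊢
    omega
  · simp only [Invmap, parts1, partsLast, List.headD_cons, List.getLastD_cons]
    rw [List.dropLast_cons₂, List.chain'_cons]
    constructor
    · omega
    · have h5 : List.Chain' (· > ·) (a :: b :: t).dropLast :=
          List.IsChain.infix hch (List.dropLast_prefix _).isInfix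
      rwa [List.dropLast_cons₂] at h5
  · simp only [Invmap, parts1, partsLast, List.headD_cons, List.getLastD_cons]
    intro x hx
    simp only [List.mem_cons] at hx
    rcases hx with rfl | hx
    · omega
    · exact hpos1 x (List.dropLast_subset _ hx)
  · simp only [Invmap, List.getLastD_cons, List.headD_cons, List.tail_cons]
    intro x hx
    simp only [List.mem_cons] at hx
    rcases hx with rfl | rfl | hx
    · exact hz2'
    · omega
    · exact hpos2 x (by
        have h6 := List.dropLast_subset (k2 :: s) hx
        simp only [List.mem_cons] at h6 ⊢
        tauto)
  · simp [Invmap]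
  · simp only [Invmap, parts1, parts2, partsLast, List.headD_cons,
      List.tail_cons, List.getLastD_cons]
    rw [List.dropLast_cons₂, List.getLastD_cons, List.headD_cons]
    have hk := key (b :: t) a hch (by simp)
    rw [List.getLastD_cons] at hk
    omega

lemma inv_right : ∀ q ∈ M0, T0map (Invmap q) = q := by
  intro q hq
  obtain ⟨a, b, t, k1, k2, s, rfl⟩ := destruct q hq.1 hq.2.1
  obtain ⟨⟨hlen, hch, hpos1, hpos2⟩, hdim, hlt⟩ := hq
  simp only [List.getLastD_cons, List.headD_cons] at hlt
  simp only [Invmap, parts1, partsLast, List.headD_cons, List.getLastD_cons,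
    List.tail_cons, List.dropLast_cons₂]
  simp only [T0map, T0parts, T0mults, Prod.mk.injEq]
  have e1 : a + t.getLastD b - a = t.getLastD b := by omega
  have e2 : s.getLastD k2 + (k1 - s.getLastD k2) = k1 := by omega
  have h1 := dropLast_concat_getLastD (b :: t) a (by simp)
  rw [List.getLastD_cons] at h1
  have h2 := dropLast_concat_getLastD (k2 :: s) k1 (by simp)
  rw [List.getLastD_cons] at h2
  rw [e1, e2, h1, h2]
  exact ⟨rfl, rfl⟩

lemma size_eq : ∀ p ∈ Tri0, psize (T0map p) = psize p := by
  intro p hp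
  obtain ⟨a, b, t, k1, k2, s, rfl⟩ := destruct p hp.1 hp.2.1
  obtain ⟨⟨hlen, hch, hpos1, hpos2⟩, hdim, hlt⟩ := hp
  replace hlen : (a :: b :: t).length = (k1 :: k2 :: s).length := hlen
  replace hch : List.Chain' (· > ·) (a :: b :: t) := hch
  have hab : b < a := (List.chain'_cons.mp hch).1
  have hts : t.length = s.length := by simp at hlen; omega
  obtain ⟨c, rfl⟩ : ∃ c, a = b + c := ⟨a - b, by omega⟩
  simp only [T0map, T0parts, T0mults, psize, List.zipWith_cons_cons,
    Nat.add_sub_cancel_left, List.zipWith_append hts,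
    List.sum_append, List.sum_cons, List.zipWith_nil_left, List.sum_nil]
  ring

end T0proof

theorem stmt3 : Set.BijOn T0map Tri0 M0 ∧ ∀ p ∈ Tri0, psize (T0map p) = psize p := by
  refine ⟨⟨T0proof.mem_fwd, ?_, ?_⟩, T0proof.size_eq⟩
  · intro p hp q hq h
    rw [← T0proof.inv_left p hp, ← T0proof.inv_left q hq, h]
  · intro q hq
    exact ⟨T0proof.Invmap q, T0proof.inv_mem q hq, T0proof.inv_right q hq⟩
end

section
/- The map T₁ is a bijection from △₁ (partitions of dimension ≥ 2 with λ₁ > λ₂ + λ_m) onto M₁ (partitions of dimension ≥ 2 with k₁ < k_m), and this bijection preserves the size of the partition. -/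
/-! ### Auxiliary machinery for `stmt4` -/

def S1map (p : List ℕ × List ℕ) : List ℕ × List ℕ :=
  ((parts1 p.1 + partsLast p.1.tail) :: p.1.tail,
    p.2.dropLast ++ [p.2.getLastD 0 - p.2.headD 0])

lemma getLastD_cons_concat (k c d : ℕ) (v : List ℕ) : (k :: (v ++ [c])).getLastD d = c := by
  rw [← List.cons_append, List.getLastD_concat]

lemma dropLast_cons_concat (k c : ℕ) (v : List ℕ) : (k :: (v ++ [c])).dropLast = k :: v := by
  rw [← List.cons_append, List.dropLast_concat]

lemma headD_concat_mem (u : List ℕ) (b d : ℕ) : (u ++ [b]).headD d ∈ u ++ [b] := by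
  cases u <;> simp

lemma getLast?_cons_concat (k c : ℕ) (v : List ℕ) : (k :: (v ++ [c])).getLast? = some c := by
  rw [← List.cons_append, List.getLast?_concat]

lemma chain'_cons_concat {R : ℕ → ℕ → Prop} {a b : ℕ} {u : List ℕ} :
    List.Chain' R (a :: (u ++ [b])) ↔
      R a ((u ++ [b]).headD 0) ∧ List.Chain' R (u ++ [b]) := by
  show List.IsChain R (a :: (u ++ [b])) ↔ R a ((u ++ [b]).headD 0) ∧ List.IsChain R (u ++ [b])
  rw [List.isChain_cons]
  cases u <;> simp

lemma decomp {p : List ℕ × List ℕ} (hp : IsPart p) (h2 : 2 ≤ p.1.length) :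
    ∃ a u b k v c, p = (a :: (u ++ [b]), k :: (v ++ [c])) ∧ u.length = v.length := by
  obtain ⟨L, K⟩ := p
  obtain ⟨hlen, -, -, -⟩ := hp
  simp only at hlen h2
  obtain ⟨a, t, rfl⟩ : ∃ a t, L = a :: t := by
    cases L with
    | nil => simp at h2
    | cons a t => exact ⟨a, t, rfl⟩
  obtain ⟨u, b, rfl⟩ : ∃ u b, t = u ++ [b] := by
    rcases t.eq_nil_or_concat with rfl | ⟨u, b, rfl⟩
    · simp at h2
    · exact ⟨u, b, List.concat_eq_append⟩
  obtain ⟨k, s, rfl⟩ : ∃ k s, K = k :: s := by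
    cases K with
    | nil => simp at hlen
    | cons k s => exact ⟨k, s, rfl⟩
  obtain ⟨v, c, rfl⟩ : ∃ v c, s = v ++ [c] := by
    rcases s.eq_nil_or_concat with rfl | ⟨v, c, rfl⟩
    · simp at hlen
    · exact ⟨v, c, List.concat_eq_append⟩
  refine ⟨a, u, b, k, v, c, rfl, ?_⟩
  simp at hlen; omega

lemma mem_Tri1_iff (a b k c : ℕ) (u v : List ℕ) (hlen : u.length = v.length) :
    (a :: (u ++ [b]), k :: (v ++ [c])) ∈ Tri1 ↔
      List.Chain' (· > ·) (a :: (u ++ [b])) ∧ (∀ x ∈ a :: (u ++ [b]), 0 < x) ∧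
      (∀ x ∈ k :: (v ++ [c]), 0 < x) ∧ (u ++ [b]).headD 0 + b < a := by
  unfold Tri1 IsPart parts1 parts2 partsLast
  simp only [Set.mem_setOf_eq, List.getLastD_cons, List.getLastD_concat, List.tail_cons,
    List.headD_cons, List.length_cons, List.length_append, hlen, List.length_singleton]
  constructor
  · tauto
  · rintro ⟨hc, hp1, hp2, h⟩
    refine ⟨⟨?_, hc, hp1, hp2⟩, by simp, h⟩
    simp [hlen]

lemma mem_M1_iff (a b k c : ℕ) (u v : List ℕ) (hlen : u.length = v.length) :
    (a :: (u ++ [b]), k :: (v ++ [c])) ∈ M1 ↔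
      List.Chain' (· > ·) (a :: (u ++ [b])) ∧ (∀ x ∈ a :: (u ++ [b]), 0 < x) ∧
      (∀ x ∈ k :: (v ++ [c]), 0 < x) ∧ k < c := by
  unfold M1 IsPart
  simp only [Set.mem_setOf_eq, List.getLastD_cons, List.getLastD_concat,
    List.headD_cons, List.length_cons, List.length_append, hlen, List.length_singleton]
  constructor
  · tauto
  · rintro ⟨hc, hp1, hp2, h⟩
    refine ⟨⟨?_, hc, hp1, hp2⟩, by simp, h⟩
    simp [hlen]

lemma T1map_eq (a b k c : ℕ) (u v : List ℕ) :
    T1map (a :: (u ++ [b]), k :: (v ++ [c])) =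
      ((a - b) :: (u ++ [b]), k :: (v ++ [k + c])) := by
  simp [T1map, T1parts, T1mults, parts1, partsLast, List.getLastD_cons, List.getLastD_concat,
    getLastD_cons_concat, dropLast_cons_concat, getLast?_cons_concat]

lemma S1map_eq (a b k c : ℕ) (u v : List ℕ) :
    S1map (a :: (u ++ [b]), k :: (v ++ [c])) =
      ((a + b) :: (u ++ [b]), k :: (v ++ [c - k])) := by
  simp [S1map, parts1, partsLast, List.getLastD_cons, List.getLastD_concat,
    getLastD_cons_concat, dropLast_cons_concat, getLast?_cons_concat]

lemma psize_decomp (a b k c : ℕ) (u v : List ℕ) (h : u.length = v.length) :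
    psize (a :: (u ++ [b]), k :: (v ++ [c])) =
      a * k + (List.zipWith (· * ·) u v).sum + b * c := by
  simp only [psize, List.zipWith_cons_cons, List.zipWith_append h,
    List.zipWith_cons_cons, List.zipWith_nil_right, List.sum_cons, List.sum_append,
    List.sum_nil]
  omega


theorem stmt4 : Set.BijOn T1map Tri1 M1 ∧ ∀ p ∈ Tri1, psize (T1map p) = psize p := by
  have hmt : Set.MapsTo T1map Tri1 M1 := by
    rintro p hp
    obtain ⟨a, u, b, k, v, c, rfl, hlen⟩ := decomp hp.1 hp.2.1
    rw [mem_Tri1_iff _ _ _ _ _ _ hlen] at hp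
    obtain ⟨hc, hp1, hp2, hlt⟩ := hp
    rw [chain'_cons_concat] at hc
    have hb : 0 < b := hp1 b (by simp)
    have hc0 : 0 < c := hp2 c (by simp)
    have hhead : 0 < (u ++ [b]).headD 0 :=
      hp1 _ (List.mem_cons_of_mem _ (headD_concat_mem u b 0))
    rw [T1map_eq, mem_M1_iff _ _ _ _ _ _ hlen]
    refine ⟨chain'_cons_concat.2 ⟨by omega, hc.2⟩, ?_, ?_, by omega⟩
    · intro x hx
      rcases List.mem_cons.1 hx with rfl | hx
      · omega
      · exact hp1 x (List.mem_cons_of_mem _ hx)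
    · intro x hx
      rcases List.mem_cons.1 hx with rfl | hx
      · exact hp2 x (by simp)
      · rcases List.mem_append.1 hx with hx | hx
        · exact hp2 x (by simp [hx])
        · simp at hx; omega
  have hms : Set.MapsTo S1map M1 Tri1 := by
    rintro q hq
    obtain ⟨a, u, b, k, v, c, rfl, hlen⟩ := decomp hq.1 hq.2.1
    rw [mem_M1_iff _ _ _ _ _ _ hlen] at hq
    obtain ⟨hc, hp1, hp2, hkc⟩ := hq
    rw [chain'_cons_concat] at hc
    have ha : 0 < a := hp1 a (by simp)
    rw [S1map_eq, mem_Tri1_iff _ _ _ _ _ _ hlen]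
    refine ⟨chain'_cons_concat.2 ⟨by omega, hc.2⟩, ?_, ?_, by omega⟩
    · intro x hx
      rcases List.mem_cons.1 hx with rfl | hx
      · omega
      · exact hp1 x (List.mem_cons_of_mem _ hx)
    · intro x hx
      rcases List.mem_cons.1 hx with rfl | hx
      · exact hp2 x (by simp)
      · rcases List.mem_append.1 hx with hx | hx
        · exact hp2 x (by simp [hx])
        · simp at hx; omega
  have hleft : Set.LeftInvOn S1map T1map Tri1 := by
    rintro p hp
    obtain ⟨a, u, b, k, v, c, rfl, hlen⟩ := decomp hp.1 hp.2.1
    rw [mem_Tri1_iff _ _ _ _ _ _ hlen] at hp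
    have hb : b ≤ a := by have := hp.2.2.2; omega
    rw [T1map_eq, S1map_eq]
    have h1 : a - b + b = a := by omega
    have h2 : k + c - k = c := by omega
    rw [h1, h2]
  have hright : Set.RightInvOn S1map T1map M1 := by
    rintro q hq
    obtain ⟨a, u, b, k, v, c, rfl, hlen⟩ := decomp hq.1 hq.2.1
    rw [mem_M1_iff _ _ _ _ _ _ hlen] at hq
    have hk : k ≤ c := le_of_lt hq.2.2.2
    rw [S1map_eq, T1map_eq]
    have h1 : a + b - b = a := by omega
    have h2 : k + (c - k) = c := by omega
    rw [h1, h2]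
  refine ⟨Set.InvOn.bijOn ⟨hleft, hright⟩ hmt hms, ?_⟩
  rintro p hp
  obtain ⟨a, u, b, k, v, c, rfl, hlen⟩ := decomp hp.1 hp.2.1
  rw [mem_Tri1_iff _ _ _ _ _ _ hlen] at hp
  have hb : b ≤ a := by have := hp.2.2.2; omega
  rw [T1map_eq, psize_decomp _ _ _ _ _ _ hlen, psize_decomp _ _ _ _ _ _ hlen]
  have h1 : (a - b) * k = a * k - b * k := Nat.sub_mul a b k
  have h2 : b * k ≤ a * k := Nat.mul_le_mul_right k hb
  have h3 : b * (k + c) = b * k + b * c := Nat.mul_add b k c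
  omega
end

section
/- Every positive integer n has as many partitions with λ₁ < λ₂ + λ_m (into at least two distinct parts) as partitions with k₁ > k_m, and as many partitions with λ₁ > λ₂ + λ_m as partitions with k₁ < k_m. -/
/- ### auxiliary lemmas -/

def U0map (p : List ℕ × List ℕ) : List ℕ × List ℕ :=
  ((parts1 p.1 + partsLast p.1) :: p.1.dropLast,
   p.2.getLastD 0 :: (p.2.headD 0 - p.2.getLastD 0) :: p.2.tail.dropLast)

def U1map (p : List ℕ × List ℕ) : List ℕ × List ℕ :=
  ((parts1 p.1 + partsLast p.1) :: p.1.tail,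
   p.2.dropLast ++ [p.2.getLastD 0 - p.2.headD 0])

lemma ncard_eq_of_maps {α : Type*} (f g : α → α) {s t : Set α}
    (hf : ∀ p ∈ s, f p ∈ t) (hgf : ∀ p ∈ s, g (f p) = p)
    (hg : ∀ q ∈ t, g q ∈ s) (hfg : ∀ q ∈ t, f (g q) = q) :
    s.ncard = t.ncard := by
  have himg : f '' s = t := by
    apply subset_antisymm
    · rintro _ ⟨p, hp, rfl⟩; exact hf p hp
    · exact fun q hq => ⟨g q, hg q hq, hfg q hq⟩
  rw [← himg]
  rw [Set.ncard_image_of_injOn]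
  intro p hp p' hp' h
  rw [← hgf p hp, ← hgf p' hp', h]

lemma getLast?_cons' (a : ℕ) (l : List ℕ) : (a :: l).getLast? = some (l.getLastD a) := by
  rw [List.getLast?_cons, List.getLastD_eq_getLast?]

lemma sum_zipWith_concat (l₁ l₂ : List ℕ) (x y : ℕ) (h : l₁.length = l₂.length) :
    (List.zipWith (· * ·) (l₁ ++ [x]) (l₂ ++ [y])).sum
      = (List.zipWith (· * ·) l₁ l₂).sum + x * y := by
  rw [List.zipWith_append h]
  simp

lemma chain'_concat_iff (l : List ℕ) (a x : ℕ) :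
    List.Chain' (· > ·) ((a :: l) ++ [x]) ↔
      List.Chain' (· > ·) (a :: l) ∧ x < l.getLastD a := by
  simp only [List.Chain']
  rw [List.isChain_append]
  simp [getLast?_cons']

theorem stmt5 (n : ℕ) (hn : 0 < n) :
    {p | p ∈ Tri0 ∧ psize p = n}.ncard = {p | p ∈ M0 ∧ psize p = n}.ncard ∧
    {p | p ∈ Tri1 ∧ psize p = n}.ncard = {p | p ∈ M1 ∧ psize p = n}.ncard := by
  constructor
  · apply ncard_eq_of_maps T0map U0map
    · -- T0 maps Tri0 to M0
      rintro ⟨L, K⟩ ⟨⟨⟨hlen, hchain, hLpos, hKpos⟩, hlen2, hcond⟩, hsize⟩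
      match L, K with
      | a :: b :: t, x :: y :: s =>
        simp only [List.length_cons] at hlen
        have hts : t.length = s.length := by omega
        have hab : b < a := (List.isChain_cons_cons.mp hchain).1
        have hlastlt : a - b < t.getLastD b := by
          simp only [parts1, parts2, partsLast, List.headD_cons, List.tail_cons,
            List.getLastD_cons] at hcond
          omega
        have hchain' : List.Chain' (· > ·) (b :: t) := (List.isChain_cons_cons.mp hchain).2
        refine ⟨⟨⟨?_, ?_, ?_, ?_⟩, ?_, ?_⟩, ?_⟩
        · simp [T0map, T0parts, T0mults]; omega
        · show List.Chain' (· > ·) (b :: (t ++ [a - b]))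
          rw [show b :: (t ++ [a - b]) = (b :: t) ++ [a - b] by simp,
            chain'_concat_iff]
          exact ⟨hchain', hlastlt⟩
        · intro q hq
          simp only [T0map, T0parts, List.mem_cons, List.mem_append,
            List.mem_singleton, List.not_mem_nil, or_false] at hq
          rcases hq with h | h | h
          · rw [h]; exact hLpos b (by simp)
          · exact hLpos q (by simp [h])
          · rw [h]; omega
        · intro q hq
          simp only [T0map, T0mults, List.mem_cons, List.mem_append,
            List.mem_singleton, List.not_mem_nil, or_false] at hq
          have hx : 0 < x := hKpos x (by simp)
          rcases hq with h | h | h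
          · rw [h]; omega
          · exact hKpos q (by simp [h])
          · rw [h]; exact hx
        · simp [T0map, T0parts]
        · -- k_m < k_1 in image
          have hy : 0 < y := hKpos y (by simp)
          show ((x + y) :: (s ++ [x])).getLastD 0 < ((x + y) :: (s ++ [x])).headD 0
          rw [List.getLastD_cons, List.getLastD_concat]
          simp; omega
        · -- psize preserved
          show (List.zipWith (· * ·) ((b :: t) ++ [a - b]) (((x + y) :: s) ++ [x])).sum = n
          rw [sum_zipWith_concat _ _ _ _ (by simp [hts])]
          simp only [psize, List.zipWith_cons_cons, List.sum_cons] at hsize ⊢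
          obtain ⟨c, rfl⟩ : ∃ c, a = b + c := ⟨a - b, by omega⟩
          have : b + c - b = c := by omega
          rw [this] at *
          rw [← hsize]; ring
    · -- U0 ∘ T0 = id on Tri0
      rintro ⟨L, K⟩ ⟨⟨⟨hlen, hchain, hLpos, hKpos⟩, hlen2, hcond⟩, hsize⟩
      match L, K with
      | a :: b :: t, x :: y :: s =>
        have hab : b < a := (List.isChain_cons_cons.mp hchain).1
        simp only [T0map, T0parts, T0mults, U0map, parts1, partsLast,
          List.headD_cons, List.getLastD_cons, List.getLastD_concat,
          List.tail_cons, List.dropLast_concat]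
        rw [show b :: (t ++ [a-b]) = (b :: t) ++ [a-b] by simp, List.dropLast_concat]
        rw [Prod.ext_iff]
        constructor
        · simp <;> omega
        · simp <;> omega
    · -- U0 maps M0 to Tri0
      rintro ⟨L, K⟩ ⟨⟨⟨hlen, hchain, hLpos, hKpos⟩, hlen2, hcond⟩, hsize⟩
      match L, K with
      | c :: u, z :: w =>
        simp only [List.length_cons] at hlen hlen2
        have hu : u ≠ [] := by rintro rfl; simp only [List.length_nil] at hlen2; omega
        have hw : w ≠ [] := by
          rintro rfl; simp only [List.length_nil] at hlen; omega
        obtain ⟨u₀, ul, rfl⟩ : ∃ u₀ ul, u = u₀ ++ [ul] := by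
          rcases List.eq_nil_or_concat u with h | ⟨u₀, ul, h⟩
          · exact absurd h hu
          · exact ⟨u₀, ul, by simpa using h⟩
        obtain ⟨w₀, wl, rfl⟩ : ∃ w₀ wl, w = w₀ ++ [wl] := by
          rcases List.eq_nil_or_concat w with h | ⟨w₀, wl, h⟩
          · exact absurd h hw
          · exact ⟨w₀, wl, by simpa using h⟩
        have hlw : u₀.length = w₀.length := by simp at hlen; omega
        have hwz : wl < z := by
          simp only [List.getLastD_cons, List.getLastD_concat, List.headD_cons] at hcond
          exact hcond
        have hchain0 : List.Chain' (· > ·) ((c :: u₀) ++ [ul]) := by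
          simpa using hchain
        rw [chain'_concat_iff] at hchain0
        simp only [U0map, parts1, partsLast, List.headD_cons, List.getLastD_cons,
          List.getLastD_concat, List.tail_cons, List.dropLast_concat]
        rw [show c :: (u₀ ++ [ul]) = (c :: u₀) ++ [ul] by simp, List.dropLast_concat]
        have hul : 0 < ul := hLpos ul (by simp)
        refine ⟨⟨⟨?_, ?_, ?_, ?_⟩, ?_, ?_⟩, ?_⟩
        · simp [hlw]
        · simp only [List.Chain']
          rw [List.isChain_cons_cons]
          exact ⟨by omega, hchain0.1⟩
        · intro q hq
          simp only [List.mem_cons] at hq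
          have hc : 0 < c := hLpos c (by simp)
          rcases hq with h | h | h
          · rw [h]; omega
          · rw [h]; exact hc
          · exact hLpos q (by simp [h])
        · intro q hq
          simp only [List.mem_cons] at hq
          rcases hq with h | h | h
          · rw [h]; exact hKpos wl (by simp)
          · rw [h]; omega
          · exact hKpos q (by simp [h])
        · simp
        · simp only [parts1, parts2, partsLast, List.headD_cons, List.tail_cons,
            List.getLastD_cons]
          have := hchain0.2
          omega
        · -- size
          simp only [psize] at hsize ⊢
          rw [show c :: (u₀ ++ [ul]) = (c :: u₀) ++ [ul] by simp,
            show z :: (w₀ ++ [wl]) = (z :: w₀) ++ [wl] by simp,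
            sum_zipWith_concat _ _ _ _ (by simp [hlw])] at hsize
          simp only [List.zipWith_cons_cons, List.sum_cons] at hsize ⊢
          obtain ⟨d, rfl⟩ : ∃ d, z = wl + d := ⟨z - wl, by omega⟩
          have : wl + d - wl = d := by omega
          rw [this]
          rw [← hsize]; ring
    · -- T0 ∘ U0 = id on M0
      rintro ⟨L, K⟩ ⟨⟨⟨hlen, hchain, hLpos, hKpos⟩, hlen2, hcond⟩, hsize⟩
      match L, K with
      | c :: u, z :: w =>
        simp only [List.length_cons] at hlen hlen2
        have hu : u ≠ [] := by rintro rfl; simp only [List.length_nil] at hlen2; omega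
        have hw : w ≠ [] := by
          rintro rfl; simp only [List.length_nil] at hlen; omega
        obtain ⟨u₀, ul, rfl⟩ : ∃ u₀ ul, u = u₀ ++ [ul] := by
          rcases List.eq_nil_or_concat u with h | ⟨u₀, ul, h⟩
          · exact absurd h hu
          · exact ⟨u₀, ul, by simpa using h⟩
        obtain ⟨w₀, wl, rfl⟩ : ∃ w₀ wl, w = w₀ ++ [wl] := by
          rcases List.eq_nil_or_concat w with h | ⟨w₀, wl, h⟩
          · exact absurd h hw
          · exact ⟨w₀, wl, by simpa using h⟩
        have hwz : wl < z := by
          simp only [List.getLastD_cons, List.getLastD_concat, List.headD_cons] at hcond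
          exact hcond
        simp only [U0map, T0map, T0parts, T0mults, parts1, partsLast,
          List.headD_cons, List.getLastD_cons, List.getLastD_concat,
          List.tail_cons, List.dropLast_concat]
        rw [show c :: (u₀ ++ [ul]) = (c :: u₀) ++ [ul] by simp, List.dropLast_concat]
        rw [Prod.ext_iff]
        constructor
        · simp <;> omega
        · simp <;> omega
  · apply ncard_eq_of_maps T1map U1map
    · -- T1 maps Tri1 to M1
      rintro ⟨L, K⟩ ⟨⟨⟨hlen, hchain, hLpos, hKpos⟩, hlen2, hcond⟩, hsize⟩
      match L, K with
      | a :: r, k₁ :: k' =>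
        simp only [List.length_cons] at hlen hlen2
        have hr : r ≠ [] := by rintro rfl; simp only [List.length_nil] at hlen2; omega
        have hk' : k' ≠ [] := by
          rintro rfl; simp only [List.length_nil] at hlen; omega
        obtain ⟨r₀, lm, rfl⟩ : ∃ r₀ lm, r = r₀ ++ [lm] := by
          rcases List.eq_nil_or_concat r with h | ⟨r₀, lm, h⟩
          · exact absurd h hr
          · exact ⟨r₀, lm, by simpa using h⟩
        obtain ⟨k₀, km, rfl⟩ : ∃ k₀ km, k' = k₀ ++ [km] := by
          rcases List.eq_nil_or_concat k' with h | ⟨k₀, km, h⟩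
          · exact absurd h hk'
          · exact ⟨k₀, km, by simpa using h⟩
        have hlk : r₀.length = k₀.length := by simp at hlen; omega
        simp only [parts1, parts2, partsLast, List.headD_cons, List.tail_cons,
          List.getLastD_cons, List.getLastD_concat] at hcond
        have hk1 : 0 < k₁ := hKpos k₁ (by simp)
        have hkm : 0 < km := hKpos km (by simp)
        have hh2 : (r₀ ++ [lm]).headD 0 + lm < a := hcond
        simp only [T1map, T1parts, T1mults, parts1, partsLast, List.headD_cons,
          List.tail_cons, List.getLastD_cons, List.getLastD_concat]
        rw [show k₁ :: (k₀ ++ [km]) = (k₁ :: k₀) ++ [km] by simp, List.dropLast_concat]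
        refine ⟨⟨⟨?_, ?_, ?_, ?_⟩, ?_, ?_⟩, ?_⟩
        · simp [hlk]
        · simp only [List.Chain']
          rw [List.isChain_cons]
          refine ⟨?_, (List.isChain_cons.mp hchain).2⟩
          intro y hy
          have : (r₀ ++ [lm]).head? = some ((r₀ ++ [lm]).headD 0) := by
            cases r₀ <;> simp
          rw [this] at hy
          simp only [Option.mem_some_iff] at hy
          omega
        · intro q hq
          simp only [List.mem_cons] at hq
          rcases hq with h | h
          · rw [h]; omega
          · exact hLpos q (by simp [h])
        · intro q hq
          simp only [List.mem_cons, List.mem_append, List.mem_singleton,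
            List.not_mem_nil, or_false] at hq
          rcases hq with (h | h) | h
          · rw [h]; exact hk1
          · exact hKpos q (by simp [h])
          · rw [h]; omega
        · simp
        · show ((k₁ :: k₀) ++ [k₁ + km]).headD 0 < ((k₁ :: k₀) ++ [k₁ + km]).getLastD 0
          rw [List.getLastD_concat]
          simp; omega
        · -- size
          simp only [psize] at hsize ⊢
          rw [show a :: (r₀ ++ [lm]) = (a :: r₀) ++ [lm] by simp,
            show k₁ :: (k₀ ++ [km]) = (k₁ :: k₀) ++ [km] by simp,
            sum_zipWith_concat _ _ _ _ (by simp [hlk])] at hsize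
          rw [show (a - lm) :: (r₀ ++ [lm]) = ((a - lm) :: r₀) ++ [lm] by simp,
            sum_zipWith_concat _ _ _ _ (by simp [hlk])]
          simp only [List.zipWith_cons_cons, List.sum_cons] at hsize ⊢
          obtain ⟨a', rfl⟩ : ∃ a', a = lm + a' := ⟨a - lm, by omega⟩
          have : lm + a' - lm = a' := by omega
          rw [this]
          rw [← hsize]; ring
    · -- U1 ∘ T1 = id on Tri1
      rintro ⟨L, K⟩ ⟨⟨⟨hlen, hchain, hLpos, hKpos⟩, hlen2, hcond⟩, hsize⟩
      match L, K with
      | a :: r, k₁ :: k' =>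
        simp only [List.length_cons] at hlen hlen2
        have hr : r ≠ [] := by rintro rfl; simp only [List.length_nil] at hlen2; omega
        have hk' : k' ≠ [] := by
          rintro rfl; simp only [List.length_nil] at hlen; omega
        obtain ⟨r₀, lm, rfl⟩ : ∃ r₀ lm, r = r₀ ++ [lm] := by
          rcases List.eq_nil_or_concat r with h | ⟨r₀, lm, h⟩
          · exact absurd h hr
          · exact ⟨r₀, lm, by simpa using h⟩
        obtain ⟨k₀, km, rfl⟩ : ∃ k₀ km, k' = k₀ ++ [km] := by
          rcases List.eq_nil_or_concat k' with h | ⟨k₀, km, h⟩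
          · exact absurd h hk'
          · exact ⟨k₀, km, by simpa using h⟩
        simp only [parts1, parts2, partsLast, List.headD_cons, List.tail_cons,
          List.getLastD_cons, List.getLastD_concat] at hcond
        have e1 : T1map (a :: (r₀ ++ [lm]), k₁ :: (k₀ ++ [km]))
            = ((a - lm) :: (r₀ ++ [lm]), (k₁ :: k₀) ++ [k₁ + km]) := by
          simp only [T1map, T1parts, T1mults, parts1, partsLast, List.headD_cons,
            List.tail_cons, List.getLastD_cons, List.getLastD_concat]
          rw [show k₁ :: (k₀ ++ [km]) = (k₁ :: k₀) ++ [km] from rfl,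
            List.dropLast_concat]
        rw [e1]
        simp only [U1map, parts1, partsLast, List.headD_cons, List.tail_cons,
          List.getLastD_cons, List.getLastD_concat, List.dropLast_concat]
        rw [show (k₁ :: k₀) ++ [k₁ + km] = k₁ :: (k₀ ++ [k₁ + km]) from rfl]
        simp only [List.headD_cons]
        rw [Prod.ext_iff]
        constructor
        · simp <;> omega
        · simp <;> omega
    · -- U1 maps M1 to Tri1
      rintro ⟨L, K⟩ ⟨⟨⟨hlen, hchain, hLpos, hKpos⟩, hlen2, hcond⟩, hsize⟩
      match L, K with
      | c :: u, z :: w =>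
        simp only [List.length_cons] at hlen hlen2
        have hu : u ≠ [] := by rintro rfl; simp only [List.length_nil] at hlen2; omega
        have hw : w ≠ [] := by
          rintro rfl; simp only [List.length_nil] at hlen; omega
        obtain ⟨u₀, ul, rfl⟩ : ∃ u₀ ul, u = u₀ ++ [ul] := by
          rcases List.eq_nil_or_concat u with h | ⟨u₀, ul, h⟩
          · exact absurd h hu
          · exact ⟨u₀, ul, by simpa using h⟩
        obtain ⟨w₀, wl, rfl⟩ : ∃ w₀ wl, w = w₀ ++ [wl] := by
          rcases List.eq_nil_or_concat w with h | ⟨w₀, wl, h⟩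
          · exact absurd h hw
          · exact ⟨w₀, wl, by simpa using h⟩
        have hlw : u₀.length = w₀.length := by simp at hlen; omega
        have hzw : z < wl := by
          simp only [List.getLastD_cons, List.getLastD_concat, List.headD_cons] at hcond
          exact hcond
        have hchead : ∀ y ∈ (u₀ ++ [ul]).head?, c > y := (List.isChain_cons.mp hchain).1
        have hheadlt : (u₀ ++ [ul]).headD 0 < c := by
          have : (u₀ ++ [ul]).head? = some ((u₀ ++ [ul]).headD 0) := by
            cases u₀ <;> simp
          exact hchead _ (by rw [this]; simp)
        have hul : 0 < ul := hLpos ul (by simp)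
        simp only [U1map, parts1, partsLast, List.headD_cons, List.tail_cons,
          List.getLastD_cons, List.getLastD_concat]
        rw [show z :: (w₀ ++ [wl]) = (z :: w₀) ++ [wl] by simp, List.dropLast_concat]
        refine ⟨⟨⟨?_, ?_, ?_, ?_⟩, ?_, ?_⟩, ?_⟩
        · simp [hlw]
        · simp only [List.Chain']
          rw [List.isChain_cons]
          refine ⟨?_, (List.isChain_cons.mp hchain).2⟩
          intro y hy
          have : (u₀ ++ [ul]).head? = some ((u₀ ++ [ul]).headD 0) := by
            cases u₀ <;> simp
          rw [this] at hy
          simp only [Option.mem_some_iff] at hy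
          omega
        · intro q hq
          simp only [List.mem_cons] at hq
          rcases hq with h | h
          · rw [h]; omega
          · exact hLpos q (by simp [h])
        · intro q hq
          simp only [List.mem_cons, List.mem_append, List.mem_singleton,
            List.not_mem_nil, or_false] at hq
          rcases hq with (h | h) | h
          · rw [h]; exact hKpos z (by simp)
          · exact hKpos q (by simp [h])
          · rw [h]; omega
        · simp
        · simp only [parts1, parts2, partsLast, List.headD_cons, List.tail_cons,
            List.getLastD_cons, List.getLastD_concat]
          omega
        · -- size
          simp only [psize] at hsize ⊢
          rw [show c :: (u₀ ++ [ul]) = (c :: u₀) ++ [ul] by simp,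
            show z :: (w₀ ++ [wl]) = (z :: w₀) ++ [wl] by simp,
            sum_zipWith_concat _ _ _ _ (by simp [hlw])] at hsize
          rw [show (c + ul) :: (u₀ ++ [ul]) = ((c + ul) :: u₀) ++ [ul] by simp,
            sum_zipWith_concat _ _ _ _ (by simp [hlw])]
          simp only [List.zipWith_cons_cons, List.sum_cons] at hsize ⊢
          obtain ⟨d, rfl⟩ : ∃ d, wl = z + d := ⟨wl - z, by omega⟩
          have : z + d - z = d := by omega
          rw [this]
          rw [← hsize]; ring
    · -- T1 ∘ U1 = id on M1
      rintro ⟨L, K⟩ ⟨⟨⟨hlen, hchain, hLpos, hKpos⟩, hlen2, hcond⟩, hsize⟩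
      match L, K with
      | c :: u, z :: w =>
        simp only [List.length_cons] at hlen hlen2
        have hu : u ≠ [] := by rintro rfl; simp only [List.length_nil] at hlen2; omega
        have hw : w ≠ [] := by
          rintro rfl; simp only [List.length_nil] at hlen; omega
        obtain ⟨u₀, ul, rfl⟩ : ∃ u₀ ul, u = u₀ ++ [ul] := by
          rcases List.eq_nil_or_concat u with h | ⟨u₀, ul, h⟩
          · exact absurd h hu
          · exact ⟨u₀, ul, by simpa using h⟩
        obtain ⟨w₀, wl, rfl⟩ : ∃ w₀ wl, w = w₀ ++ [wl] := by
          rcases List.eq_nil_or_concat w with h | ⟨w₀, wl, h⟩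
          · exact absurd h hw
          · exact ⟨w₀, wl, by simpa using h⟩
        have hzw : z < wl := by
          simp only [List.getLastD_cons, List.getLastD_concat, List.headD_cons] at hcond
          exact hcond
        simp only [U1map, T1map, T1parts, T1mults, parts1, partsLast,
          List.headD_cons, List.tail_cons, List.getLastD_cons, List.getLastD_concat]
        rw [show z :: (w₀ ++ [wl]) = (z :: w₀) ++ [wl] by simp, List.dropLast_concat]
        rw [List.dropLast_concat]
        rw [Prod.ext_iff]
        constructor
        · simp <;> omega
        · simp <;> omega
end

section
/- For any fixed positive integer d, every positive integer n has as many partitions with λ₂ + λ_m = λ₁ + d as partitions with k₁ > k_m and λ_{m−1} = λ_m + d. -/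
def Smap (p : List ℕ × List ℕ) : List ℕ × List ℕ :=
  ((p.1.headD 0 + p.1.getLastD 0) :: p.1.dropLast,
   p.2.getLastD 0 :: (p.2.headD 0 - p.2.getLastD 0) :: p.2.tail.dropLast)

def SetA (d n : ℕ) : Set (List ℕ × List ℕ) :=
  {p | IsPart p ∧ 2 ≤ p.1.length ∧ psize p = n ∧
      parts2 p.1 + partsLast p.1 = parts1 p.1 + d}

def SetB (d n : ℕ) : Set (List ℕ × List ℕ) :=
  {p | IsPart p ∧ 2 ≤ p.1.length ∧ psize p = n ∧
      p.2.getLastD 0 < p.2.headD 0 ∧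
      partsPrelast p.1 = partsLast p.1 + d}

lemma memA (d n : ℕ) {p : List ℕ × List ℕ} (hp : p ∈ SetA d n) :
    ∃ a b t x y s, p = (a :: b :: t, x :: y :: s) := by
  obtain ⟨⟨hlen, -, -, -⟩, hlen2, -, -⟩ := hp
  obtain ⟨L, K⟩ := p
  match L, K, hlen, hlen2 with
  | a :: b :: t, x :: y :: s, _, _ => exact ⟨a, b, t, x, y, s, rfl⟩
  | a :: b :: t, [], h, _ => simp at h
  | a :: b :: t, [x], h, _ => simp at h

lemma memB (d n : ℕ) {p : List ℕ × List ℕ} (hp : p ∈ SetB d n) :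
    ∃ c u e x v l, p = (c :: (u ++ [e]), x :: (v ++ [l])) := by
  obtain ⟨⟨hlen, -, -, -⟩, hlen2, -, -⟩ := hp
  obtain ⟨L, K⟩ := p
  match L, K, hlen, hlen2 with
  | a :: b :: t, x :: y :: s, _, _ =>
    obtain ⟨u, e, h1⟩ := (List.eq_nil_or_concat (b :: t)).resolve_left (by simp)
    obtain ⟨v, l, h2⟩ := (List.eq_nil_or_concat (y :: s)).resolve_left (by simp)
    exact ⟨a, u, e, x, v, l, by rw [h1, h2]; simp⟩
  | a :: b :: t, [], h, _ => simp at h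
  | a :: b :: t, [x], h, _ => simp at h

lemma getLast?_cons'_s6 (b : ℕ) (t : List ℕ) : (b :: t).getLast? = some (t.getLastD b) := by
  induction t generalizing b with
  | nil => rfl
  | cons h t ih => rw [List.getLastD_cons, List.getLast?_cons_cons]; exact ih h


lemma mapsTo1 (d n : ℕ) (hd : 0 < d) : Set.MapsTo T0map (SetA d n) (SetB d n) := by
  intro p hp
  obtain ⟨a, b, t, x, y, s, rfl⟩ := memA d n hp
  obtain ⟨⟨hlen, hchain, hpos1, hpos2⟩, -, hsize, hcond⟩ := hp
  simp only [List.length_cons] at hlen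
  have hlen' : t.length = s.length := by omega
  have hab : a > b := (List.isChain_cons_cons.mp hchain).1
  have hbt : List.Chain' (· > ·) (b :: t) := (List.isChain_cons_cons.mp hchain).2
  have hb : 0 < b := hpos1 b (by simp)
  have ht : ∀ w ∈ t, 0 < w := fun w hw => hpos1 w (by simp [hw])
  have hx : 0 < x := hpos2 x (by simp)
  have hy : 0 < y := hpos2 y (by simp)
  have hs : ∀ w ∈ s, 0 < w := fun w hw => hpos2 w (by simp [hw])
  simp only [parts2, partsLast, parts1, List.tail_cons, List.headD_cons,
    List.getLastD_cons] at hcond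
  obtain ⟨c, rfl⟩ : ∃ c, a = b + c := ⟨a - b, by omega⟩
  have hc : 0 < c := by omega
  have hT : T0map (((b + c) :: b :: t, x :: y :: s) : List ℕ × List ℕ)
      = (b :: (t ++ [c]), (x + y) :: (s ++ [x])) := by
    simp only [T0map, T0parts, T0mults, show b + c - b = c from by omega]
  rw [hT]
  refine ⟨⟨?_, ?_, ?_, ?_⟩, ?_, ?_, ?_, ?_⟩
  · simp; omega
  · show List.Chain' (· > ·) ((b :: t) ++ [c])
    apply List.isChain_append.mpr
    refine ⟨hbt, List.isChain_singleton _, ?_⟩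
    intro z hz w hw
    rw [getLast?_cons'_s6, Option.mem_def, Option.some.injEq] at hz
    simp only [List.head?_cons, Option.mem_def, Option.some.injEq] at hw
    omega
  · intro z hz
    simp only [List.mem_cons, List.mem_append, List.mem_singleton] at hz
    rcases hz with rfl | hz | rfl | hz0
    · exact hb
    · exact ht z hz
    · exact hc
    · exact absurd hz0 (List.not_mem_nil)
  · intro z hz
    simp only [List.mem_cons, List.mem_append, List.mem_singleton] at hz
    rcases hz with rfl | hz | rfl | hz0
    · omega
    · exact hs z hz
    · exact hx
    · exact absurd hz0 (List.not_mem_nil)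
  · simp
  · show psize (b :: (t ++ [c]), (x + y) :: (s ++ [x])) = n
    simp only [psize, List.zipWith_cons_cons, List.zipWith_append hlen',
      List.sum_cons, List.sum_append, List.zipWith_nil_right, List.sum_nil] at hsize ⊢
    rw [← hsize]; ring
  · show ((x + y) :: (s ++ [x])).getLastD 0 < ((x + y) :: (s ++ [x])).headD 0
    rw [List.getLastD_cons, List.getLastD_concat, List.headD_cons]
    omega
  · show partsPrelast _ = partsLast _ + d
    simp only [partsPrelast, partsLast]
    rw [show b :: (t ++ [c]) = (b :: t) ++ [c] from rfl, List.dropLast_concat,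
      List.getLastD_concat, List.getLastD_cons]
    omega

lemma mapsTo2 (d n : ℕ) : Set.MapsTo Smap (SetB d n) (SetA d n) := by
  intro p hp
  obtain ⟨c, u, e, x, v, l, rfl⟩ := memB d n hp
  obtain ⟨⟨hlen, hchain, hpos1, hpos2⟩, -, hsize, hk, hpre⟩ := hp
  simp only [List.length_cons, List.length_append, List.length_singleton] at hlen
  have hlen' : u.length = v.length := by omega
  simp only [List.headD_cons, List.getLastD_cons, List.getLastD_concat] at hk
  simp only [partsPrelast, partsLast, List.getLastD_cons, List.getLastD_concat,
    show c :: (u ++ [e]) = (c :: u) ++ [e] from rfl, List.dropLast_concat] at hpre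
  have hc : 0 < c := hpos1 c (by simp)
  have he : 0 < e := hpos1 e (by simp)
  have hu : ∀ w ∈ u, 0 < w := fun w hw => hpos1 w (by simp [hw])
  have hl : 0 < l := hpos2 l (by simp)
  have hv : ∀ w ∈ v, 0 < w := fun w hw => hpos2 w (by simp [hw])
  have hcu : List.Chain' (· > ·) (c :: u) :=
    (List.isChain_append.mp (show List.Chain' (· > ·) ((c :: u) ++ [e]) from hchain)).1
  obtain ⟨f, rfl⟩ : ∃ f, x = l + f := ⟨x - l, by omega⟩
  have hf : 0 < f := by omega
  have hS : Smap ((c :: (u ++ [e]), (l + f) :: (v ++ [l])) : List ℕ × List ℕ)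
      = ((c + e) :: c :: u, l :: f :: v) := by
    unfold Smap
    simp only [List.headD_cons, List.getLastD_cons, List.getLastD_concat, List.tail_cons]
    rw [show c :: (u ++ [e]) = (c :: u) ++ [e] from rfl, List.dropLast_concat,
      List.dropLast_concat]
    simp [show l + f - l = f from by omega]
  rw [hS]
  refine ⟨⟨?_, ?_, ?_, ?_⟩, ?_, ?_, ?_⟩
  · simp; omega
  · apply List.isChain_cons_cons.mpr
    exact ⟨by omega, hcu⟩
  · intro z hz
    simp only [List.mem_cons] at hz
    rcases hz with rfl | rfl | hz
    · omega
    · exact hc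
    · exact hu z hz
  · intro z hz
    simp only [List.mem_cons] at hz
    rcases hz with rfl | rfl | hz
    · exact hl
    · exact hf
    · exact hv z hz
  · simp
  · show psize ((c + e) :: c :: u, l :: f :: v) = n
    simp only [psize, List.zipWith_cons_cons, List.zipWith_append hlen',
      List.sum_cons, List.sum_append, List.zipWith_nil_right, List.sum_nil] at hsize ⊢
    rw [← hsize]; ring
  · simp only [parts2, partsLast, parts1, List.tail_cons, List.headD_cons,
      List.getLastD_cons]
    omega

lemma leftInv (d n : ℕ) : Set.LeftInvOn Smap T0map (SetA d n) := by
  intro p hp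
  obtain ⟨a, b, t, x, y, s, rfl⟩ := memA d n hp
  obtain ⟨⟨hlen, hchain, hpos1, hpos2⟩, -, -, -⟩ := hp
  have hab : a > b := (List.isChain_cons_cons.mp hchain).1
  obtain ⟨c, rfl⟩ : ∃ c, a = b + c := ⟨a - b, by omega⟩
  have hT : T0map (((b + c) :: b :: t, x :: y :: s) : List ℕ × List ℕ)
      = (b :: (t ++ [c]), (x + y) :: (s ++ [x])) := by
    simp only [T0map, T0parts, T0mults, show b + c - b = c from by omega]
  rw [hT]
  unfold Smap
  simp only [List.headD_cons, List.getLastD_cons, List.getLastD_concat, List.tail_cons]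
  rw [show b :: (t ++ [c]) = (b :: t) ++ [c] from rfl, List.dropLast_concat,
    List.dropLast_concat]
  simp [show x + y - x = y from by omega]

lemma rightInv (d n : ℕ) : Set.LeftInvOn T0map Smap (SetB d n) := by
  intro p hp
  obtain ⟨c, u, e, x, v, l, rfl⟩ := memB d n hp
  obtain ⟨⟨hlen, hchain, hpos1, hpos2⟩, -, -, hk, -⟩ := hp
  simp only [List.headD_cons, List.getLastD_cons, List.getLastD_concat] at hk
  obtain ⟨f, rfl⟩ : ∃ f, x = l + f := ⟨x - l, by omega⟩
  have hS : Smap ((c :: (u ++ [e]), (l + f) :: (v ++ [l])) : List ℕ × List ℕ)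
      = ((c + e) :: c :: u, l :: f :: v) := by
    unfold Smap
    simp only [List.headD_cons, List.getLastD_cons, List.getLastD_concat, List.tail_cons]
    rw [show c :: (u ++ [e]) = (c :: u) ++ [e] from rfl, List.dropLast_concat,
      List.dropLast_concat]
    simp [show l + f - l = f from by omega]
  rw [hS]
  simp only [T0map, T0parts, T0mults, show c + e - c = e from by omega]

theorem stmt6 (d n : ℕ) (hd : 0 < d) (hn : 0 < n) :
    {p : List ℕ × List ℕ | IsPart p ∧ 2 ≤ p.1.length ∧ psize p = n ∧
        parts2 p.1 + partsLast p.1 = parts1 p.1 + d}.ncard =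
    {p : List ℕ × List ℕ | IsPart p ∧ 2 ≤ p.1.length ∧ psize p = n ∧
        p.2.getLastD 0 < p.2.headD 0 ∧
        partsPrelast p.1 = partsLast p.1 + d}.ncard := by
  have hbij : Set.BijOn T0map (SetA d n) (SetB d n) :=
    Set.InvOn.bijOn ⟨leftInv d n, rightInv d n⟩ (mapsTo1 d n hd) (mapsTo2 d n)
  show (SetA d n).ncard = (SetB d n).ncard
  calc (SetA d n).ncard = (T0map '' (SetA d n)).ncard :=
        (Set.ncard_image_of_injOn hbij.injOn).symm
    _ = (SetB d n).ncard := by rw [hbij.image_eq]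
end

section
/- The cylinder set △₀₀ ∩ P_{≥3} equals the set of partitions of dimension m ≥ 3 satisfying λ₁ < λ₂ + λ_m and 2λ₂ < λ₁ + λ₃; i.e., for λ of dimension ≥ 3, λ ∈ △₀ and T₀(λ) ∈ △₀ if and only if λ₁ < λ₂ + λ_m and 2λ₂ < λ₁ + λ₃. -/
lemma getLastD_irrel (c : ℕ) (t : List ℕ) (x : ℕ) : (c::t).getLastD x = (c::t).getLastD 0 := by
  simp [List.getLastD_eq_getLast?, List.getLast?_eq_getLast]

lemma getLastD_mem (c : ℕ) (t : List ℕ) : (c::t).getLastD 0 ∈ c::t := by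
  simp [List.getLastD_eq_getLast?, List.getLast?_eq_getLast]

lemma chain'_append_single (a b : ℕ) (l : List ℕ) (hc : List.Chain' (·>·) (a::l))
    (hm : (a::l).getLastD 0 > b) : List.Chain' (·>·) ((a::l) ++ [b]) := by
  unfold List.Chain'; rw [List.isChain_append]
  refine ⟨hc, List.isChain_singleton _, ?_⟩
  intro x hx y hy
  simp at hy; subst hy
  rw [List.getLast?_eq_getLast (l := a :: l) (by simp)] at hx
  simp at hx; subst hx
  simpa [List.getLastD_eq_getLast?, List.getLast?_eq_getLast] using hm

theorem stmt9 (p : List ℕ × List ℕ) (hP : IsPart p) (hm : 3 ≤ p.1.length) :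
    (p ∈ Tri0 ∧ T0map p ∈ Tri0) ↔
      (parts1 p.1 < parts2 p.1 + partsLast p.1 ∧
       2 * parts2 p.1 < parts1 p.1 + parts3 p.1) := by
  obtain ⟨L, K⟩ := p
  obtain ⟨hlen, hchain, hpos1, hpos2⟩ := hP
  simp only at hlen hchain hpos1 hpos2 hm ⊢
  match L, K, hm, hlen with
  | a :: b :: c :: t, k1 :: k2 :: s, _, hlen =>
  simp only [List.Chain', List.isChain_cons_cons] at hchain
  obtain ⟨hab, hbc, hct⟩ := hchain
  set m := (c::t).getLastD 0 with hmdef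
  have hmmem : m ∈ a :: b :: c :: t := by
    simp only [List.mem_cons]; right; right; exact List.mem_cons.mp (getLastD_mem c t)
  have hmpos : 0 < m := hpos1 _ hmmem
  have hLlast : partsLast (a :: b :: c :: t) = m := by
    show (a :: b :: c :: t).getLastD 0 = m
    rw [List.getLastD_cons, List.getLastD_cons, getLastD_irrel]
  have hT0 : T0map (a :: b :: c :: t, k1 :: k2 :: s)
      = (b :: ((c::t) ++ [a - b]), (k1+k2) :: (s ++ [k1])) := rfl
  have hT0last : partsLast (b :: ((c::t) ++ [a - b])) = a - b := by
    show (b :: ((c::t) ++ [a - b])).getLastD 0 = a - b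
    rw [List.getLastD_cons, List.getLastD_concat]
  have hT01 : parts1 (b :: ((c::t) ++ [a - b])) = b := rfl
  have hT02 : parts2 (b :: ((c::t) ++ [a - b])) = c := rfl
  have hp1 : parts1 (a :: b :: c :: t) = a := rfl
  have hp2 : parts2 (a :: b :: c :: t) = b := rfl
  have hp3 : parts3 (a :: b :: c :: t) = c := rfl
  constructor
  · rintro ⟨⟨-, -, h1⟩, -, -, h2⟩
    rw [hLlast, hp1, hp2] at h1
    rw [hT0] at h2
    simp only at h2
    rw [hT01, hT02, hT0last] at h2
    rw [hp1, hp2, hp3, hLlast]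
    exact ⟨h1, by omega⟩
  · rintro ⟨h1, h2⟩
    rw [hp1, hp2, hp3] at h2
    rw [hp1, hp2, hLlast] at h1
    have hpos1' : ∀ x ∈ b :: ((c::t) ++ [a - b]), 0 < x := by
      intro y hy
      rw [List.mem_cons, List.mem_append] at hy
      rcases hy with h | hy | hy
      · subst h; exact hpos1 y (by simp)
      · exact hpos1 y (by simp [hy])
      · simp at hy; omega
    have hpos2' : ∀ x ∈ (k1+k2) :: (s ++ [k1]), 0 < x := by
      intro y hy
      rw [List.mem_cons, List.mem_append] at hy
      rcases hy with h | hy | hy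
      · have e1 := hpos2 k1 (by simp); have e2 := hpos2 k2 (by simp); omega
      · exact hpos2 y (by simp [hy])
      · simp at hy; have := hpos2 k1 (by simp); omega
    have hchain' : List.Chain' (·>·) (b :: ((c::t) ++ [a - b])) := by
      have he : b :: ((c::t) ++ [a - b]) = (b :: c :: t) ++ [a - b] := by simp
      rw [he]
      apply chain'_append_single
      · simp only [List.Chain', List.isChain_cons_cons]; exact ⟨hbc, hct⟩
      · rw [List.getLastD_cons, getLastD_irrel, ← hmdef]; omega
    have hIsPart : IsPart (a :: b :: c :: t, k1 :: k2 :: s) :=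
      ⟨hlen, by simp only [List.Chain', List.isChain_cons_cons]; exact ⟨hab, hbc, hct⟩, hpos1, hpos2⟩
    refine ⟨⟨hIsPart, by simp, by rw [hp1, hp2, hLlast]; exact h1⟩, ?_⟩
    rw [hT0]
    refine ⟨⟨by simpa using hlen, hchain', hpos1', hpos2'⟩, by simp, ?_⟩
    show parts1 _ < parts2 _ + partsLast _
    simp only
    rw [hT01, hT02, hT0last]
    omega
end

section
/- Every positive integer n has as many partitions with λ₁ < λ₂ + λ_m and 2λ₂ < λ₁ + λ₃ (dimension ≥ 3, with the dimension-2 analogue λ₁ < 2λ₂, 2λ₁ > 3λ₂) as partitions with λ₁ < λ₂ + λ_m and k₁ > k_m. -/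
def Uinv (q : List ℕ × List ℕ) : List ℕ × List ℕ :=
  ((q.1.headD 0 + q.1.getLastD 0) :: q.1.dropLast,
   q.2.getLastD 0 :: (q.2.headD 0 - q.2.getLastD 0) :: q.2.tail.dropLast)

def Sset (n : ℕ) : Set (List ℕ × List ℕ) :=
  {p : List ℕ × List ℕ | IsPart p ∧ psize p = n ∧
        ((3 ≤ p.1.length ∧ parts1 p.1 < parts2 p.1 + partsLast p.1 ∧
            2 * parts2 p.1 < parts1 p.1 + parts3 p.1) ∨
         (p.1.length = 2 ∧ parts1 p.1 < 2 * parts2 p.1 ∧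
            3 * parts2 p.1 < 2 * parts1 p.1))}

def Rset (n : ℕ) : Set (List ℕ × List ℕ) :=
  {p : List ℕ × List ℕ | IsPart p ∧ 2 ≤ p.1.length ∧ psize p = n ∧
        parts1 p.1 < parts2 p.1 + partsLast p.1 ∧
        p.2.getLastD 0 < p.2.headD 0}

lemma helper1 (c : ℕ) (t : List ℕ) : (c :: t).getLast? = some (t.getLastD c) := by
  induction t generalizing c with
  | nil => rfl
  | cons d t ih => rw [List.getLast?_cons_cons, ih, List.getLastD_cons]

lemma lemA (n : ℕ) (p : List ℕ × List ℕ) (hp : p ∈ Sset n) :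
    T0map p ∈ Rset n ∧ Uinv (T0map p) = p := by
  obtain ⟨L, K⟩ := p
  obtain ⟨⟨hl, hch, hp1, hp2⟩, hsz, hor⟩ := hp
  have hL2 : 2 ≤ L.length := by
    rcases hor with ⟨h, _⟩ | ⟨h, _⟩ <;> simp only at h <;> omega
  rcases L with _ | ⟨a, L⟩; · simp at hL2
  rcases L with _ | ⟨b, t⟩; · simp at hL2
  rcases K with _ | ⟨k1, K⟩; · simp at hl
  rcases K with _ | ⟨k2, ks⟩; · simp at hl
  have hlen : t.length = ks.length := by simpa using hl
  simp only [List.Chain'] at hch; rw [List.isChain_cons_cons] at hch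
  obtain ⟨hab, hch⟩ := hch
  have hk2 : 0 < k2 := hp2 _ (by simp)
  have hk1 : 0 < k1 := hp2 _ (by simp)
  simp only [T0map, T0parts, T0mults, Uinv]
  constructor
  · refine ⟨⟨by simp [hlen], ?_, ?_, ?_⟩, by simp, ?_, ?_, ?_⟩
    · -- chain of b :: (t ++ [a-b])
      simp only [List.Chain']; rw [show b :: (t ++ [a - b]) = (b :: t) ++ [a - b] from rfl, List.isChain_append]
      refine ⟨hch, List.isChain_singleton _, ?_⟩
      intro x hx y hy
      rw [helper1] at hx
      simp only [Option.mem_def, Option.some.injEq, List.head?] at hx hy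
      subst hx; subst hy
      -- need t.getLastD b > a - b
      rcases hor with ⟨_, h2, _⟩ | ⟨h1, h2, h3⟩
      · simp only [parts1, parts2, partsLast, List.headD, List.tail, List.getLastD_cons] at h2
        omega
      · have ht : t = [] := by simpa using h1
        subst ht
        simp only [parts1, parts2, List.headD, List.tail] at h2
        simp only [List.getLastD]; omega
    · intro x hx
      simp only [List.mem_cons, List.mem_append, List.mem_singleton, List.not_mem_nil, or_false] at hx
      rcases hx with rfl | hx | rfl
      · exact hp1 _ (by simp)
      · exact hp1 _ (by simp [hx])
      · omega
    · intro x hx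
      simp only [List.mem_cons, List.mem_append, List.mem_singleton, List.not_mem_nil, or_false] at hx
      rcases hx with rfl | hx | rfl
      · omega
      · exact hp2 _ (by simp [hx])
      · omega
    · -- psize preserved
      rw [← hsz]
      simp only [psize, List.zipWith_cons_cons, List.sum_cons]
      rw [List.zipWith_append hlen, List.sum_append]
      simp only [List.zipWith_cons_cons, List.zipWith_nil_right, List.sum_cons, List.sum_nil]
      have h1 : (a - b) * k1 + b * k1 = a * k1 := by
        rw [← Nat.add_mul, Nat.sub_add_cancel (le_of_lt hab)]
      have h2 : b * (k1 + k2) = b * k1 + b * k2 := by ring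
      omega
    · -- triangle condition for image
      simp only [parts1, parts2, partsLast, List.headD, List.tail, List.getLastD_cons,
        List.getLastD_concat]
      rcases t with _ | ⟨c, t'⟩
      · simp only [List.nil_append, List.headD]
        rcases hor with ⟨h1, _⟩ | ⟨_, h2, h3⟩
        · simp at h1
        · simp only [parts1, parts2, List.headD, List.tail] at h2 h3; omega
      · simp only [List.cons_append, List.headD]
        rcases hor with ⟨_, h2, h3⟩ | ⟨h1, _⟩
        · simp only [parts1, parts2, parts3, List.headD, List.tail] at h2 h3
          omega
        · simp at h1
    · -- k_m < k_1 for image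
      simp only [List.getLastD_cons, List.getLastD_concat, List.headD_cons]
      omega
  · -- left inverse
    have e1 : (b :: (t ++ [a - b])).getLastD 0 = a - b := by
      rw [List.getLastD_cons, List.getLastD_concat]
    have e2 : (b :: (t ++ [a - b])).dropLast = b :: t := by
      rw [show b :: (t ++ [a - b]) = (b :: t) ++ [a - b] from rfl, List.dropLast_concat]
    have e3 : ((k1 + k2) :: (ks ++ [k1])).getLastD 0 = k1 := by
      rw [List.getLastD_cons, List.getLastD_concat]
    have e4 : ((k1 + k2) :: (ks ++ [k1])).tail.dropLast = ks := by
      rw [List.tail_cons, List.dropLast_concat]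
    simp only [List.headD_cons, e1, e2, e3, e4]
    rw [Nat.add_sub_cancel_left, Nat.add_sub_cancel' (le_of_lt hab)]

lemma lemB (n : ℕ) (q : List ℕ × List ℕ) (hq : q ∈ Rset n) :
    Uinv q ∈ Sset n ∧ T0map (Uinv q) = q := by
  obtain ⟨L, K⟩ := q
  obtain ⟨⟨hl, hch, hp1, hp2⟩, hL2, hsz, htri, hmk⟩ := hq
  simp only at hL2 hl
  rcases L with _ | ⟨m1, ms⟩; · simp at hL2
  rcases K with _ | ⟨j1, js⟩; · simp at hl
  rcases List.eq_nil_or_concat ms with rfl | ⟨mid, w, rfl⟩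
  · simp at hL2
  rcases List.eq_nil_or_concat js with rfl | ⟨jmid, jm, rfl⟩
  · simp at hl
  simp only [List.concat_eq_append] at hl hch hp1 hp2 hsz htri hmk ⊢
  have hlen : mid.length = jmid.length := by simpa using hl
  have hUq : Uinv (m1 :: (mid ++ [w]), j1 :: (jmid ++ [jm])) =
      ((m1 + w) :: m1 :: mid, jm :: (j1 - jm) :: jmid) := by
    simp only [Uinv, List.headD_cons, List.getLastD_cons, List.getLastD_concat, List.tail_cons]
    rw [show m1 :: (mid ++ [w]) = (m1 :: mid) ++ [w] from rfl, List.dropLast_concat,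
      List.dropLast_concat]
  rw [hUq]
  have hw : 0 < w := hp1 _ (by simp)
  have hjm : 0 < jm := hp2 _ (by simp)
  have hj1jm : jm < j1 := by
    simpa only [List.getLastD_cons, List.getLastD_concat, List.headD_cons] using hmk
  have hchmid : List.Chain' (· > ·) (m1 :: mid) :=
    hch.prefix (by rw [show m1 :: (mid ++ [w]) = (m1 :: mid) ++ [w] from rfl]; exact List.prefix_append _ _)
  constructor
  · refine ⟨⟨by simp [hlen], ?_, ?_, ?_⟩, ?_, ?_⟩
    · simp only [List.Chain']; rw [List.isChain_cons_cons]
      exact ⟨by omega, hchmid⟩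
    · intro x hx
      simp only [List.mem_cons] at hx
      rcases hx with rfl | rfl | hx
      · omega
      · exact hp1 _ (by simp)
      · exact hp1 _ (by simp [hx])
    · intro x hx
      simp only [List.mem_cons] at hx
      rcases hx with rfl | rfl | hx
      · omega
      · omega
      · exact hp2 _ (by simp [hx])
    · -- psize
      rw [← hsz]
      simp only [psize, List.zipWith_cons_cons, List.sum_cons]
      rw [List.zipWith_append hlen, List.sum_append]
      simp only [List.zipWith_cons_cons, List.zipWith_nil_right, List.sum_cons, List.sum_nil]
      have h1 : m1 * (j1 - jm) + m1 * jm = m1 * j1 := by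
        rw [← Nat.mul_add, Nat.sub_add_cancel (le_of_lt hj1jm)]
      have h2 : (m1 + w) * jm = m1 * jm + w * jm := by ring
      omega
    · -- the big disjunction
      rcases mid with _ | ⟨c, mid'⟩
      · right
        rw [List.nil_append] at htri hch
        simp only [List.Chain'] at hch; rw [List.isChain_cons_cons] at hch
        obtain ⟨h1, -⟩ := hch
        have htri' : m1 < w + w := by
          simpa only [parts1, parts2, partsLast, List.headD_cons, List.tail_cons,
            show (m1 :: [w]).getLastD 0 = w from rfl] using htri
        refine ⟨rfl, ?_, ?_⟩ <;>
          simp only [parts1, parts2, List.headD_cons, List.tail_cons] <;> omega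
      · left
        simp only [parts1, parts2, parts3, partsLast, List.headD_cons, List.tail_cons,
          List.getLastD_cons, List.getLastD_concat, List.cons_append] at htri ⊢
        have hch2 : List.Chain' (· > ·) ((m1 :: c :: mid') ++ [w]) := hch
        simp only [List.Chain'] at hch2; rw [List.isChain_append] at hch2
        have hlast := hch2.2.2 (mid'.getLastD c)
          (by rw [helper1 m1 (c :: mid'), List.getLastD_cons]; rfl) w rfl
        exact ⟨by simp, by omega, by omega⟩
  · -- T0map ∘ Uinv = id
    simp only [T0map, T0parts, T0mults]
    rw [Nat.add_sub_cancel_left, Nat.add_sub_cancel' hj1jm.le]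

theorem stmt13 (n : ℕ) (hn : 0 < n) :
    {p : List ℕ × List ℕ | IsPart p ∧ psize p = n ∧
        ((3 ≤ p.1.length ∧ parts1 p.1 < parts2 p.1 + partsLast p.1 ∧
            2 * parts2 p.1 < parts1 p.1 + parts3 p.1) ∨
         (p.1.length = 2 ∧ parts1 p.1 < 2 * parts2 p.1 ∧
            3 * parts2 p.1 < 2 * parts1 p.1))}.ncard =
    {p : List ℕ × List ℕ | IsPart p ∧ 2 ≤ p.1.length ∧ psize p = n ∧
        parts1 p.1 < parts2 p.1 + partsLast p.1 ∧
        p.2.getLastD 0 < p.2.headD 0}.ncard := by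
  show (Sset n).ncard = (Rset n).ncard
  have him : Rset n = T0map '' Sset n := by
    ext q
    constructor
    · intro hq
      exact ⟨Uinv q, (lemB n q hq).1, (lemB n q hq).2⟩
    · rintro ⟨p, hp, rfl⟩
      exact (lemA n p hp).1
  have hinj : Set.InjOn T0map (Sset n) := fun p hp p' hp' h => by
    rw [← (lemA n p hp).2, ← (lemA n p' hp').2, h]
  rw [him, Set.ncard_image_of_injOn hinj]
end

section
/- For each 0 ≤ p ≤ d, the p-th iterate T₁^p is a size-preserving bijection from △_d^G = {partitions with λ₁ − λ₂ − dλ_m > 0 > λ₁ − λ₂ − (d+1)λ_m} onto △_{d−p}^G ∩ {partitions with p·k₁ < k_m}. -/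
def Umap (q : List ℕ × List ℕ) : List ℕ × List ℕ :=
  ((parts1 q.1 + partsLast q.1) :: q.1.tail,
   q.2.dropLast ++ [q.2.getLastD 0 - q.2.headD 0])

lemma headD_mem {l : List ℕ} (h : l ≠ []) : l.headD 0 ∈ l := by
  cases l with
  | nil => exact absurd rfl h
  | cons a t => simp

lemma chain'_cons_iff {a : ℕ} {l : List ℕ} (h : l ≠ []) :
    List.Chain' (· > ·) (a :: l) ↔ l.headD 0 < a ∧ List.Chain' (· > ·) l := by
  cases l with
  | nil => exact absurd rfl h
  | cons b t => simp only [List.Chain', List.isChain_cons_cons, List.headD_cons, gt_iff_lt]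

lemma getLastD_cons_append (a z : ℕ) (M : List ℕ) : (a :: (M ++ [z])).getLastD 0 = z := by
  rw [← List.cons_append]; exact List.getLastD_concat

lemma getLast?_cons_append (a z : ℕ) (M : List ℕ) : (a :: (M ++ [z])).getLast? = some z := by
  rw [← List.cons_append]; exact List.getLast?_concat

lemma dropLast_cons_append (a z : ℕ) (M : List ℕ) : (a :: (M ++ [z])).dropLast = a :: M := by
  rw [← List.cons_append]; exact List.dropLast_concat

lemma canon {q : List ℕ × List ℕ} (h1 : q.1.length = q.2.length) (h2 : 2 ≤ q.1.length) :
    ∃ a M z k N r, M.length = N.length ∧ q = (a :: M ++ [z], k :: N ++ [r]) := by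
  obtain ⟨L, K⟩ := q
  simp only at h1 h2
  cases L with
  | nil => simp at h2
  | cons a L' =>
    cases K with
    | nil => simp at h1
    | cons k K' =>
      rcases List.eq_nil_or_concat L' with rfl | ⟨M, z, rfl⟩
      · simp at h2
      · rcases List.eq_nil_or_concat K' with rfl | ⟨N, r, rfl⟩
        · simp at h1
        · refine ⟨a, M, z, k, N, r, ?_, by simp⟩
          simp at h1; omega

lemma psize_canon (x z y w : ℕ) (M N : List ℕ) (h : M.length = N.length) :
    psize (x :: (M ++ [z]), y :: (N ++ [w])) =
      x * y + (List.zipWith (· * ·) M N).sum + z * w := by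
  simp only [psize, List.zipWith_cons_cons, List.sum_cons]
  rw [List.zipWith_append h, List.sum_append]
  simp
  ring

lemma Gauss_pos {d : ℕ} {q : List ℕ × List ℕ} (hq : q ∈ GaussSet d) :
    0 < q.2.headD 0 ∧ 0 < q.2.getLastD 0 := by
  obtain ⟨⟨hlen, hch, hpos1, hpos2⟩, hlen2, _, _⟩ := hq
  obtain ⟨a, M, z, k, N, r, hMN, hq⟩ := canon hlen hlen2
  subst hq
  dsimp only at *
  simp only [List.cons_append] at *
  constructor
  · exact hpos2 k (by simp)
  · rw [getLastD_cons_append]; exact hpos2 r (by simp)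

lemma step_mem {d : ℕ} {q : List ℕ × List ℕ} (hq : q ∈ GaussSet (d + 1)) :
    T1map q ∈ GaussSet d ∧
    (T1map q).2.headD 0 = q.2.headD 0 ∧
    (T1map q).2.getLastD 0 = q.2.headD 0 + q.2.getLastD 0 ∧
    psize (T1map q) = psize q ∧
    Umap (T1map q) = q := by
  obtain ⟨⟨hlen, hchain, hpos1, hpos2⟩, hlen2, hlo, hhi⟩ := hq
  obtain ⟨a, M, z, k, N, r, hMN, hq⟩ := canon hlen hlen2
  subst hq
  dsimp only at *
  simp only [List.cons_append] at *
  simp only [parts1, parts2, partsLast, List.headD_cons, List.tail_cons,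
    getLastD_cons_append] at hlo hhi
  set b := (M ++ [z]).headD 0 with hb
  have hne : (M ++ [z] : List ℕ) ≠ [] := by simp
  rw [chain'_cons_iff hne] at hchain
  obtain ⟨hab, hchain'⟩ := hchain
  have hz : 0 < z := hpos1 z (by simp)
  have hbpos : 0 < b := hpos1 b (List.mem_cons_of_mem _ (headD_mem hne))
  have hk : 0 < k := hpos2 k (by simp)
  have hr : 0 < r := hpos2 r (by simp)
  obtain ⟨u, hu⟩ : ∃ u, u = d * z := ⟨_, rfl⟩
  have e1 : (d + 1) * z = u + z := by rw [hu]; ring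
  have e2 : (d + 1 + 1) * z = u + 2 * z := by rw [hu]; ring
  rw [e1] at hlo
  rw [e2] at hhi
  have hT : T1map (a :: (M ++ [z]), k :: (N ++ [r])) =
      ((a - z) :: (M ++ [z]), k :: (N ++ [k + r])) := by
    simp [T1map, T1parts, T1mults, parts1, partsLast, getLastD_cons_append, getLast?_cons_append,
      dropLast_cons_append]
  rw [hT]
  refine ⟨⟨⟨by simp [hMN], ?_, ?_, ?_⟩, by simp, ?_, ?_⟩, rfl, ?_, ?_, ?_⟩
  · rw [chain'_cons_iff hne]
    exact ⟨by omega, hchain'⟩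
  · intro x hx
    rcases List.mem_cons.mp hx with rfl | hx
    · omega
    · exact hpos1 x (List.mem_cons_of_mem _ hx)
  · intro x hx
    rcases List.mem_cons.mp hx with rfl | hx
    · exact hk
    · rcases List.mem_append.mp hx with hx | hx
      · exact hpos2 x (List.mem_cons_of_mem _ (List.mem_append_left _ hx))
      · simp at hx; omega
  · simp only [parts1, parts2, partsLast, List.headD_cons, List.tail_cons,
      getLastD_cons_append, ← hb, ← hu, e1]
    omega
  · simp only [parts1, parts2, partsLast, List.headD_cons, List.tail_cons,
      getLastD_cons_append, ← hb, ← hu, e1]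
    omega
  · simp [getLastD_cons_append, getLast?_cons_append]
  · rw [psize_canon _ _ _ _ _ _ hMN, psize_canon _ _ _ _ _ _ hMN]
    obtain ⟨c, hc⟩ : ∃ c, a = c + z := ⟨a - z, by omega⟩
    subst hc
    simp only [Nat.add_sub_cancel]
    ring
  · have h5a : a - z + z = a := by omega
    simp [Umap, parts1, partsLast, getLastD_cons_append, getLast?_cons_append, dropLast_cons_append, h5a]

lemma step_inv {e : ℕ} {q : List ℕ × List ℕ} (hq : q ∈ GaussSet e)
    (hk : q.2.headD 0 < q.2.getLastD 0) :
    Umap q ∈ GaussSet (e + 1) ∧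
    (Umap q).2.headD 0 = q.2.headD 0 ∧
    (Umap q).2.getLastD 0 = q.2.getLastD 0 - q.2.headD 0 ∧
    T1map (Umap q) = q := by
  obtain ⟨⟨hlen, hchain, hpos1, hpos2⟩, hlen2, hlo, hhi⟩ := hq
  obtain ⟨a, M, z, k, N, r, hMN, hq⟩ := canon hlen hlen2
  subst hq
  dsimp only at *
  simp only [List.cons_append] at *
  simp only [parts1, parts2, partsLast, List.headD_cons, List.tail_cons,
    getLastD_cons_append] at hlo hhi hk
  set b := (M ++ [z]).headD 0 with hb
  have hne : (M ++ [z] : List ℕ) ≠ [] := by simp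
  rw [chain'_cons_iff hne] at hchain
  obtain ⟨hab, hchain'⟩ := hchain
  have hz : 0 < z := hpos1 z (by simp)
  have hbpos : 0 < b := hpos1 b (List.mem_cons_of_mem _ (headD_mem hne))
  have hkp : 0 < k := hpos2 k (by simp)
  obtain ⟨u, hu⟩ : ∃ u, u = e * z := ⟨_, rfl⟩
  have e1 : (e + 1) * z = u + z := by rw [hu]; ring
  have e2 : (e + 1 + 1) * z = u + 2 * z := by rw [hu]; ring
  rw [← hu] at hlo
  rw [e1] at hhi
  have hU : Umap (a :: (M ++ [z]), k :: (N ++ [r])) =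
      ((a + z) :: (M ++ [z]), k :: (N ++ [r - k])) := by
    simp [Umap, parts1, partsLast, getLastD_cons_append, getLast?_cons_append, dropLast_cons_append]
  rw [hU]
  refine ⟨⟨⟨by simp [hMN], ?_, ?_, ?_⟩, by simp, ?_, ?_⟩, rfl, ?_, ?_⟩
  · rw [chain'_cons_iff hne]
    exact ⟨by omega, hchain'⟩
  · intro x hx
    rcases List.mem_cons.mp hx with rfl | hx
    · omega
    · exact hpos1 x (List.mem_cons_of_mem _ hx)
  · intro x hx
    rcases List.mem_cons.mp hx with rfl | hx
    · exact hkp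
    · rcases List.mem_append.mp hx with hx | hx
      · exact hpos2 x (List.mem_cons_of_mem _ (List.mem_append_left _ hx))
      · simp at hx; omega
  · simp only [parts1, parts2, partsLast, List.headD_cons, List.tail_cons,
      getLastD_cons_append, ← hb, e1]
    omega
  · simp only [parts1, parts2, partsLast, List.headD_cons, List.tail_cons,
      getLastD_cons_append, ← hb, e2]
    omega
  · simp [getLastD_cons_append, getLast?_cons_append]
  · have h5a : a + z - z = a := by omega
    have h5b : k + (r - k) = r := by omega
    simp [T1map, T1parts, T1mults, parts1, partsLast, getLastD_cons_append,
      getLast?_cons_append, dropLast_cons_append, h5a, h5b]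

lemma iter_main (p : ℕ) : ∀ d q, p ≤ d → q ∈ GaussSet d →
    T1map^[p] q ∈ GaussSet (d - p) ∧
    (T1map^[p] q).2.headD 0 = q.2.headD 0 ∧
    (T1map^[p] q).2.getLastD 0 = p * q.2.headD 0 + q.2.getLastD 0 ∧
    psize (T1map^[p] q) = psize q ∧
    Umap^[p] (T1map^[p] q) = q := by
  induction p with
  | zero => intro d q _ hq; simpa using hq
  | succ p ih =>
    intro d q hpd hq
    obtain ⟨d', rfl⟩ : ∃ d', d = d' + 1 := ⟨d - 1, by omega⟩
    obtain ⟨h1, h2, h3, h4, h5⟩ := step_mem hq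
    obtain ⟨g1, g2, g3, g4, g5⟩ := ih d' (T1map q) (by omega) h1
    rw [Function.iterate_succ_apply]
    have hdp : d' + 1 - (p + 1) = d' - p := by omega
    refine ⟨by rwa [hdp], by rw [g2, h2], ?_, by rw [g4, h4], ?_⟩
    · rw [g3, h2, h3]; ring
    · rw [Function.iterate_succ_apply', g5, h5]

lemma iter_inv (p : ℕ) : ∀ e q, q ∈ GaussSet e → p * q.2.headD 0 < q.2.getLastD 0 →
    Umap^[p] q ∈ GaussSet (e + p) ∧ T1map^[p] (Umap^[p] q) = q := by
  induction p with
  | zero => intro e q hq _; simpa using hq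
  | succ p ih =>
    intro e q hq hk
    have hpos := Gauss_pos hq
    have hk1 : q.2.headD 0 < q.2.getLastD 0 := by
      calc q.2.headD 0 = 1 * q.2.headD 0 := by ring
        _ ≤ (p + 1) * q.2.headD 0 := Nat.mul_le_mul_right _ (by omega)
        _ < q.2.getLastD 0 := hk
    obtain ⟨h1, h2, h3, h4⟩ := step_inv hq hk1
    have hk2 : p * (Umap q).2.headD 0 < (Umap q).2.getLastD 0 := by
      rw [h2, h3]
      apply Nat.lt_sub_of_add_lt
      calc p * q.2.headD 0 + q.2.headD 0 = (p + 1) * q.2.headD 0 := by ring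
        _ < q.2.getLastD 0 := hk
    obtain ⟨g1, g2⟩ := ih (e + 1) (Umap q) h1 hk2
    rw [Function.iterate_succ_apply]
    have he : e + 1 + p = e + (p + 1) := by omega
    refine ⟨by rwa [he] at g1, ?_⟩
    rw [Function.iterate_succ_apply', g2, h4]

theorem stmt15 (d p : ℕ) (hpd : p ≤ d) :
    Set.BijOn (T1map^[p]) (GaussSet d)
      (GaussSet (d - p) ∩ {q | p * q.2.headD 0 < q.2.getLastD 0}) ∧
    ∀ q ∈ GaussSet d, psize (T1map^[p] q) = psize q := by
  constructor
  · refine ⟨?_, ?_, ?_⟩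
    · intro q hq
      obtain ⟨h1, h2, h3, _, _⟩ := iter_main p d q hpd hq
      refine ⟨h1, ?_⟩
      simp only [Set.mem_setOf_eq, h2, h3]
      exact Nat.lt_add_of_pos_right (Gauss_pos hq).2
    · intro q1 h1 q2 h2 heq
      have e1 := (iter_main p d q1 hpd h1).2.2.2.2
      have e2 := (iter_main p d q2 hpd h2).2.2.2.2
      rw [← e1, ← e2, heq]
    · rintro r ⟨hr1, hr2⟩
      obtain ⟨hm, ht⟩ := iter_inv p (d - p) r hr1 hr2
      have hd : d - p + p = d := by omega
      rw [hd] at hm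
      exact ⟨Umap^[p] r, hm, ht⟩
  · intro q hq
    exact (iter_main p d q hpd hq).2.2.2.1
end

section
/- For every positive integer n, the number of partitions of n into distinct parts equals 1 + E₀(n) + E₁(n) + E_D(n) + [3 | n], where E₀(n) counts partitions of n with k₁ = 2 and all other multiplicities 1, E₁(n) counts those with k_m = 2 and all other multiplicities 1, E_D(n) counts those with k₁ = k_m = 2 and all intermediate multiplicities 1 (dimension ≥ 2 in each case), and [3 | n] is 1 if 3 divides n and 0 otherwise. -/
namespace S17

abbrev Srt (L : List ℕ) : Prop := L.Pairwise (· > ·)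

@[simp] lemma parts1_cons (a : ℕ) (l : List ℕ) : parts1 (a :: l) = a := rfl
@[simp] lemma parts2_cons (a b : ℕ) (l : List ℕ) : parts2 (a :: b :: l) = b := rfl
@[simp] lemma partsLast_concat (l : List ℕ) (x : ℕ) : partsLast (l ++ [x]) = x :=
  List.getLastD_concat
@[simp] lemma partsLast_single (a : ℕ) : partsLast [a] = a := rfl

lemma partsLast_cons {l : List ℕ} (h : l ≠ []) (a : ℕ) :
    partsLast (a :: l) = partsLast l := by
  obtain ⟨l', x, rfl⟩ := List.eq_nil_or_concat l |>.resolve_left h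
  simp only [List.concat_eq_append]
  rw [show a :: (l' ++ [x]) = (a :: l') ++ [x] by simp, partsLast_concat, partsLast_concat]

lemma partsLast_eq_getLast {L : List ℕ} (h : L ≠ []) : partsLast L = L.getLast h := by
  unfold partsLast
  rw [List.getLastD_eq_getLast?, List.getLast?_eq_getLast h]
  rfl

lemma partsLast_mem {L : List ℕ} (h : L ≠ []) : partsLast L ∈ L := by
  rw [partsLast_eq_getLast h]; exact List.getLast_mem h

lemma partsLast_le {L : List ℕ} (hs : Srt L) {x : ℕ} (hx : x ∈ L) : partsLast L ≤ x := by
  induction L with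
  | nil => simp at hx
  | cons a l ih =>
    rcases eq_or_ne l [] with rfl | hl
    · simp at hx; simp [hx]
    · rw [partsLast_cons hl]
      rcases List.mem_cons.1 hx with rfl | hx
      · exact ((List.pairwise_cons.1 hs).1 _ (partsLast_mem hl)).le
      · exact ih (List.pairwise_cons.1 hs).2 hx

lemma le_parts1 {L : List ℕ} (hs : Srt L) {x : ℕ} (hx : x ∈ L) : x ≤ parts1 L := by
  cases L with
  | nil => simp at hx
  | cons a l =>
    rcases List.mem_cons.1 hx with rfl | hx
    · simp
    · exact ((List.pairwise_cons.1 hs).1 _ hx).le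

lemma length_le_sum {L : List ℕ} (hp : ∀ x ∈ L, 0 < x) : L.length ≤ L.sum := by
  induction L with
  | nil => simp
  | cons a l ih =>
    simp only [List.length_cons, List.sum_cons]
    have := hp a (by simp)
    have := ih (fun x hx => hp x (by simp [hx]))
    omega

/-! ### list-level sets -/

def SetA (n : ℕ) : Set (List ℕ) :=
  {L | Srt L ∧ (∀ x ∈ L, 0 < x) ∧ L.sum = n}

def A1 (n : ℕ) : Set (List ℕ) := {L | L ∈ SetA n ∧ L.length = 1}
def B0 (n : ℕ) : Set (List ℕ) :=
  {L | L ∈ SetA n ∧ 2 ≤ L.length ∧ parts1 L < parts2 L + partsLast L}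
def B1 (n : ℕ) : Set (List ℕ) :=
  {L | L ∈ SetA n ∧ 2 ≤ L.length ∧ parts2 L + partsLast L < parts1 L}
def BD (n : ℕ) : Set (List ℕ) :=
  {L | L ∈ SetA n ∧ 3 ≤ L.length ∧ parts1 L = parts2 L + partsLast L}
def B3 (n : ℕ) : Set (List ℕ) :=
  {L | L ∈ SetA n ∧ L.length = 2 ∧ parts1 L = parts2 L + partsLast L}

def C0 (n : ℕ) : Set (List ℕ) :=
  {L | Srt L ∧ (∀ x ∈ L, 0 < x) ∧ 2 ≤ L.length ∧ parts1 L + L.sum = n}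
def C1 (n : ℕ) : Set (List ℕ) :=
  {L | Srt L ∧ (∀ x ∈ L, 0 < x) ∧ 2 ≤ L.length ∧ L.sum + partsLast L = n}
def CD (n : ℕ) : Set (List ℕ) :=
  {L | Srt L ∧ (∀ x ∈ L, 0 < x) ∧ 2 ≤ L.length ∧ parts1 L + L.sum + partsLast L = n}

def f0 (L : List ℕ) : List ℕ := L.tail ++ [parts1 L - parts2 L]
def g0 (M : List ℕ) : List ℕ := (parts1 M + partsLast M) :: M.dropLast
def f1 (L : List ℕ) : List ℕ := (parts1 L - partsLast L) :: L.tail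
def g1 (M : List ℕ) : List ℕ := (parts1 M + partsLast M) :: M.tail
def fD (L : List ℕ) : List ℕ := L.tail
def gD (M : List ℕ) : List ℕ := (parts1 M + partsLast M) :: M

lemma exists2 {L : List ℕ} (h : 2 ≤ L.length) : ∃ a b t, L = a :: b :: t := by
  match L with
  | a :: b :: t => exact ⟨a, b, t, rfl⟩

lemma exists_hc {M : List ℕ} (h : 2 ≤ M.length) : ∃ c l x, M = c :: (l ++ [x]) := by
  obtain ⟨c, b, t, rfl⟩ := exists2 h
  obtain ⟨l, x, hlx⟩ := List.eq_nil_or_concat (b :: t) |>.resolve_left (by simp)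
  exact ⟨c, l, x, by rw [hlx]; simp⟩

/-! ### bijection 0 -/

lemma f0_maps {n : ℕ} : Set.MapsTo f0 (B0 n) (C0 n) := by
  rintro L ⟨⟨hs, hp, hsum⟩, hlen, htri⟩
  obtain ⟨a, b, t, rfl⟩ := exists2 hlen
  have hbt : (b :: t) ≠ [] := by simp
  rw [partsLast_cons hbt] at htri
  simp only [parts1_cons, parts2_cons] at htri
  have hba : b < a := (List.pairwise_cons.1 hs).1 _ (by simp)
  have hs' : Srt (b :: t) := (List.pairwise_cons.1 hs).2
  have hxalt : ∀ x ∈ b :: t, a - b < x := by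
    intro x hx
    have h1 := partsLast_le hs' hx
    omega
  refine ⟨?_, ?_, ?_, ?_⟩
  · show Srt (f0 (a :: b :: t))
    unfold f0
    simp only [List.tail_cons, parts1_cons, parts2_cons]
    exact List.pairwise_append.2 ⟨hs', List.pairwise_singleton _ _, fun x hx y hy => by
      simp at hy; subst hy; exact hxalt x hx⟩
  · intro x hx
    unfold f0 at hx
    simp only [List.tail_cons, parts1_cons, parts2_cons, List.mem_append,
      List.mem_singleton] at hx
    rcases hx with hx | rfl
    · exact hp x (by simp [hx])
    · omega
  · unfold f0; simp
  · unfold f0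
    simp only [List.tail_cons, parts1_cons, parts2_cons] at *
    rw [show (b :: t) ++ [a - b] = b :: (t ++ [a - b]) by simp]
    simp only [parts1_cons, List.sum_cons, List.sum_append, List.sum_cons, List.sum_nil]
    simp only [List.sum_cons] at hsum
    omega

lemma g0_maps {n : ℕ} : Set.MapsTo g0 (C0 n) (B0 n) := by
  rintro M ⟨hs, hp, hlen, hsum⟩
  obtain ⟨c, l, x, rfl⟩ := exists_hc hlen
  have hM : c :: (l ++ [x]) = (c :: l) ++ [x] := by simp
  have hdl : (c :: (l ++ [x])).dropLast = c :: l := by rw [hM, List.dropLast_concat]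
  have hpl : partsLast (c :: (l ++ [x])) = x := by rw [hM, partsLast_concat]
  have hgt : ∀ y ∈ c :: l, x < y := by
    rw [hM] at hs
    have := (List.pairwise_append.1 hs).2.2
    intro y hy; exact this y hy x (by simp)
  have hxpos : 0 < x := hp x (by simp)
  have hsrt' : Srt (c :: l) := by
    rw [hM] at hs; exact (List.pairwise_append.1 hs).1
  have hcy : ∀ y ∈ c :: l, y ≤ c := fun y hy => le_parts1 hsrt' hy
  unfold g0
  rw [hdl, hpl]
  simp only [parts1_cons]
  refine ⟨⟨?_, ?_, ?_⟩, ?_, ?_⟩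
  · exact List.pairwise_cons.2 ⟨fun y hy => by have := hcy y hy; omega, hsrt'⟩
  · intro y hy
    rcases List.mem_cons.1 hy with rfl | hy
    · omega
    · exact hp y (by rw [hM]; exact List.mem_append_left _ hy)
  · simp only [parts1_cons, List.sum_cons, List.sum_append, List.sum_nil] at hsum ⊢
    omega
  · simp
  · simp only [parts1_cons, parts2_cons]
    rw [partsLast_cons (by simp : (c :: l : List ℕ) ≠ []) (c + x)]
    have h1 : partsLast (c :: l) ∈ c :: l := partsLast_mem (by simp)
    have := hgt _ h1
    omega

lemma g0f0 {n : ℕ} {L : List ℕ} (h : L ∈ B0 n) : g0 (f0 L) = L := by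
  obtain ⟨⟨hs, _, _⟩, hlen, _⟩ := h
  obtain ⟨a, b, t, rfl⟩ := exists2 hlen
  have hba : b ≤ a := ((List.pairwise_cons.1 hs).1 _ (by simp)).le
  unfold f0 g0
  simp only [List.tail_cons, parts1_cons, parts2_cons]
  rw [show (b :: t) ++ [a - b] = (b :: t) ++ [a - b] from rfl]
  rw [partsLast_concat, List.dropLast_concat]
  have hh : parts1 ((b :: t) ++ [a - b]) = b := by simp
  rw [hh]
  congr 1
  omega

lemma f0g0 {n : ℕ} {M : List ℕ} (h : M ∈ C0 n) : f0 (g0 M) = M := by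
  obtain ⟨hs, hp, hlen, hsum⟩ := h
  obtain ⟨c, l, x, rfl⟩ := exists_hc hlen
  have hM : c :: (l ++ [x]) = (c :: l) ++ [x] := by simp
  unfold g0 f0
  rw [hM, partsLast_concat, List.dropLast_concat]
  simp only [List.tail_cons, parts1_cons, parts2_cons]
  rw [show parts1 ((c :: l) ++ [x]) = c by simp]
  rw [Nat.add_sub_cancel_left]

lemma bij0 {n : ℕ} : Set.BijOn f0 (B0 n) (C0 n) := by
  refine ⟨f0_maps, ?_, ?_⟩
  · intro a ha b hb hab
    have := congrArg g0 hab
    rwa [g0f0 ha, g0f0 hb] at this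
  · intro M hM
    exact ⟨g0 M, g0_maps hM, f0g0 hM⟩

/-! ### bijection 1 -/

lemma f1_maps {n : ℕ} : Set.MapsTo f1 (B1 n) (C1 n) := by
  rintro L ⟨⟨hs, hp, hsum⟩, hlen, htri⟩
  obtain ⟨a, b, t, rfl⟩ := exists2 hlen
  have hbt : (b :: t) ≠ [] := by simp
  rw [partsLast_cons hbt] at htri
  simp only [parts1_cons, parts2_cons] at htri
  set e := partsLast (b :: t) with he
  have hs' : Srt (b :: t) := (List.pairwise_cons.1 hs).2
  have hyb : ∀ y ∈ b :: t, y ≤ b := fun y hy => le_parts1 hs' hy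
  have hpl : partsLast (a :: b :: t) = e := partsLast_cons hbt a
  unfold f1
  rw [List.tail_cons, hpl, parts1_cons]
  have hbpos : 0 < b := hp b (by simp)
  refine ⟨?_, ?_, ?_, ?_⟩
  · exact List.pairwise_cons.2 ⟨fun y hy => by have := hyb y hy; omega, hs'⟩
  · intro y hy
    rcases List.mem_cons.1 hy with rfl | hy
    · omega
    · exact hp y (by simp [hy])
  · simp
  · rw [partsLast_cons hbt]
    simp only [List.sum_cons] at hsum ⊢
    have hee : e ≤ b := hyb e (partsLast_mem hbt)
    have hes : e ≤ b + t.sum := by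
      rcases eq_or_ne t [] with rfl | ht
      · simp [he]
      · have : e = partsLast t := partsLast_cons ht b ▸ rfl
        have := List.single_le_sum (fun (x:ℕ) _ => Nat.zero_le x) _ (partsLast_mem ht)
        omega
    omega

lemma g1_maps {n : ℕ} : Set.MapsTo g1 (C1 n) (B1 n) := by
  rintro M ⟨hs, hp, hlen, hsum⟩
  obtain ⟨c, d, s, rfl⟩ := exists2 hlen
  have hds : (d :: s) ≠ [] := by simp
  set e := partsLast (d :: s) with he
  have hpl : partsLast (c :: d :: s) = e := partsLast_cons hds c
  have hs' : Srt (d :: s) := (List.pairwise_cons.1 hs).2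
  have hyc : ∀ y ∈ d :: s, y < c := (List.pairwise_cons.1 hs).1
  unfold g1
  rw [List.tail_cons, hpl, parts1_cons]
  refine ⟨⟨?_, ?_, ?_⟩, ?_, ?_⟩
  · exact List.pairwise_cons.2 ⟨fun y hy => by have := hyc y hy; omega, hs'⟩
  · intro y hy
    rcases List.mem_cons.1 hy with rfl | hy
    · have := hp c (by simp); omega
    · exact hp y (by simp [hy])
  · rw [hpl] at hsum
    simp only [List.sum_cons] at hsum ⊢
    omega
  · simp
  · rw [parts1_cons, parts2_cons, partsLast_cons hds, ← he]
    have := hyc d (by simp)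
    omega

lemma g1f1 {n : ℕ} {L : List ℕ} (h : L ∈ B1 n) : g1 (f1 L) = L := by
  obtain ⟨⟨hs, hp, hsum⟩, hlen, htri⟩ := h
  obtain ⟨a, b, t, rfl⟩ := exists2 hlen
  have hbt : (b :: t) ≠ [] := by simp
  have hpl : partsLast (a :: b :: t) = partsLast (b :: t) := partsLast_cons hbt a
  rw [hpl] at htri
  simp only [parts1_cons, parts2_cons] at htri
  unfold f1 g1
  rw [List.tail_cons, hpl, parts1_cons, List.tail_cons,
    partsLast_cons hbt, parts1_cons]
  congr 1
  omega

lemma f1g1 {n : ℕ} {M : List ℕ} (h : M ∈ C1 n) : f1 (g1 M) = M := by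
  obtain ⟨hs, hp, hlen, hsum⟩ := h
  obtain ⟨c, d, s, rfl⟩ := exists2 hlen
  have hds : (d :: s) ≠ [] := by simp
  unfold g1 f1
  rw [List.tail_cons, partsLast_cons hds c, parts1_cons, List.tail_cons,
    partsLast_cons hds, parts1_cons]
  congr 1
  omega

lemma bij1 {n : ℕ} : Set.BijOn f1 (B1 n) (C1 n) := by
  refine ⟨f1_maps, ?_, ?_⟩
  · intro a ha b hb hab
    have := congrArg g1 hab
    rwa [g1f1 ha, g1f1 hb] at this
  · intro M hM
    exact ⟨g1 M, g1_maps hM, f1g1 hM⟩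

/-! ### bijection D -/

lemma fD_maps {n : ℕ} : Set.MapsTo fD (BD n) (CD n) := by
  rintro L ⟨⟨hs, hp, hsum⟩, hlen, heq⟩
  obtain ⟨a, b, t, rfl⟩ := exists2 (show 2 ≤ L.length by omega)
  have ht : t ≠ [] := by
    intro h; subst h; simp at hlen
  have hbt : (b :: t) ≠ [] := by simp
  have hpl : partsLast (a :: b :: t) = partsLast (b :: t) := partsLast_cons hbt a
  rw [hpl] at heq
  simp only [parts1_cons, parts2_cons] at heq
  unfold fD
  rw [List.tail_cons]
  refine ⟨(List.pairwise_cons.1 hs).2, fun y hy => hp y (by simp [hy]), ?_, ?_⟩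
  · simp only [List.length_cons] at hlen ⊢; omega
  · simp only [parts1_cons, List.sum_cons] at hsum ⊢
    omega

lemma gD_maps {n : ℕ} : Set.MapsTo gD (CD n) (BD n) := by
  rintro M ⟨hs, hp, hlen, hsum⟩
  obtain ⟨c, d, s, rfl⟩ := exists2 hlen
  have hds : (d :: s) ≠ [] := by simp
  set e := partsLast (d :: s) with he
  have hpl : partsLast (c :: d :: s) = e := partsLast_cons hds c
  have hyc : ∀ y ∈ d :: s, y < c := (List.pairwise_cons.1 hs).1
  have hepos : 0 < e := hp e (List.mem_cons_of_mem c (partsLast_mem hds))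
  unfold gD
  rw [hpl, parts1_cons]
  refine ⟨⟨?_, ?_, ?_⟩, ?_, ?_⟩
  · exact List.pairwise_cons.2 ⟨fun y hy => by
      rcases List.mem_cons.1 hy with rfl | hy
      · omega
      · have := hyc y hy; omega, hs⟩
  · intro y hy
    rcases List.mem_cons.1 hy with rfl | hy
    · omega
    · exact hp y hy
  · rw [hpl, parts1_cons] at hsum
    simp only [List.sum_cons] at hsum ⊢
    omega
  · simp
  · rw [parts1_cons, parts2_cons,
      partsLast_cons (by simp : (c :: d :: s : List ℕ) ≠ []), hpl]

lemma gDfD {n : ℕ} {L : List ℕ} (h : L ∈ BD n) : gD (fD L) = L := by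
  obtain ⟨⟨hs, hp, hsum⟩, hlen, heq⟩ := h
  obtain ⟨a, b, t, rfl⟩ := exists2 (show 2 ≤ L.length by omega)
  have hbt : (b :: t) ≠ [] := by simp
  have hpl : partsLast (a :: b :: t) = partsLast (b :: t) := partsLast_cons hbt a
  rw [hpl] at heq
  simp only [parts1_cons, parts2_cons] at heq
  unfold fD gD
  rw [List.tail_cons, parts1_cons]
  congr 1
  omega

lemma fDgD {n : ℕ} {M : List ℕ} (h : M ∈ CD n) : fD (gD M) = M := rfl

lemma bijD {n : ℕ} : Set.BijOn fD (BD n) (CD n) := by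
  refine ⟨fD_maps, ?_, ?_⟩
  · intro a ha b hb hab
    have := congrArg gD hab
    rwa [gDfD ha, gDfD hb] at this
  · intro M hM
    exact ⟨gD M, gD_maps hM, fDgD hM⟩


/-! ### small sets -/

lemma A1_eq {n : ℕ} (hn : 0 < n) : A1 n = {[n]} := by
  ext L
  constructor
  · rintro ⟨⟨hs, hp, hsum⟩, hlen⟩
    match L, hlen with
    | [x], _ => simp_all
  · rintro rfl
    exact ⟨⟨List.pairwise_singleton _ _, by simpa using hn, by simp⟩, rfl⟩

lemma B3_eq_dvd {n : ℕ} (hn : 0 < n) (h : 3 ∣ n) : B3 n = {[2 * (n / 3), n / 3]} := by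
  obtain ⟨t, rfl⟩ := h
  have ht : 0 < t := by omega
  rw [Nat.mul_div_cancel_left t (by norm_num)]
  ext L
  constructor
  · rintro ⟨⟨hs, hp, hsum⟩, hlen, heq⟩
    match L, hlen with
    | [a, b], _ =>
      simp only [parts1_cons, parts2_cons] at heq
      have : partsLast [a, b] = b := by
        rw [partsLast_cons (by simp) a, partsLast_single]
      rw [this] at heq
      simp only [List.sum_cons, List.sum_nil] at hsum
      have hb : b = t := by omega
      have ha : a = 2 * t := by omega
      simp [ha, hb]
  · rintro rfl
    refine ⟨⟨?_, ?_, ?_⟩, rfl, ?_⟩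
    · exact List.pairwise_cons.2 ⟨by intro y hy; simp at hy; omega, List.pairwise_singleton _ _⟩
    · intro x hx; simp at hx; omega
    · simp; ring
    · rw [parts1_cons, parts2_cons, partsLast_cons (by simp) _, partsLast_single]
      ring

lemma B3_eq_not_dvd {n : ℕ} (h : ¬ 3 ∣ n) : B3 n = ∅ := by
  ext L
  simp only [Set.mem_empty_iff_false, iff_false]
  rintro ⟨⟨hs, hp, hsum⟩, hlen, heq⟩
  match L, hlen with
  | [a, b], _ =>
    simp only [parts1_cons, parts2_cons] at heq
    rw [partsLast_cons (by simp) a, partsLast_single] at heq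
    simp only [List.sum_cons, List.sum_nil] at hsum
    exact h ⟨b, by omega⟩

/-! ### partition of SetA -/

lemma setA_union {n : ℕ} (hn : 0 < n) :
    SetA n = A1 n ∪ B0 n ∪ B1 n ∪ BD n ∪ B3 n := by
  ext L
  constructor
  · intro hL
    obtain ⟨hs, hp, hsum⟩ := hL
    have hne : L ≠ [] := by rintro rfl; simp at hsum; omega
    have hlpos : 1 ≤ L.length := by
      cases L with | nil => simp at hne | cons a l => simp
    rcases eq_or_lt_of_le hlpos with h1 | h2
    · exact Or.inl <| Or.inl <| Or.inl <| Or.inl ⟨⟨hs, hp, hsum⟩, h1.symm⟩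
    · have hlen : 2 ≤ L.length := h2
      rcases lt_trichotomy (parts1 L) (parts2 L + partsLast L) with h | h | h
      · exact Or.inl <| Or.inl <| Or.inl <| Or.inr ⟨⟨hs, hp, hsum⟩, hlen, h⟩
      · rcases eq_or_lt_of_le hlen with h2' | h3
        · exact Or.inr ⟨⟨hs, hp, hsum⟩, h2'.symm, h⟩
        · exact Or.inl <| Or.inr ⟨⟨hs, hp, hsum⟩, h3, h⟩
      · exact Or.inl <| Or.inl <| Or.inr ⟨⟨hs, hp, hsum⟩, hlen, h⟩
  · rintro ((((h | h) | h) | h) | h) <;> exact h.1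

lemma setA_finite (n : ℕ) : (SetA n).Finite := by
  have h : {l : List (Fin (n+1)) | l.length ≤ n}.Finite := List.finite_length_le _ n
  apply Set.Finite.subset (h.image (List.map Fin.val))
  rintro L ⟨hs, hp, hsum⟩
  have hle : ∀ x ∈ L, x ≤ n := fun x hx => hsum ▸
    List.single_le_sum (fun (y : ℕ) _ => Nat.zero_le y) _ hx
  have hlen : L.length ≤ n := hsum ▸ length_le_sum hp
  refine ⟨L.map (fun x => ⟨x % (n+1), Nat.mod_lt _ (Nat.succ_pos n)⟩), by simpa using hlen, ?_⟩
  rw [List.map_map]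
  conv_rhs => rw [← List.map_id L]
  apply List.map_congr_left
  intro a ha
  have h2 : a < n + 1 := by have := hle a ha; omega
  simp [Nat.mod_eq_of_lt h2]

lemma setA_ncard {n : ℕ} (hn : 0 < n) :
    (SetA n).ncard =
      1 + (B0 n).ncard + (B1 n).ncard + (BD n).ncard + (if 3 ∣ n then 1 else 0) := by
  have hfin := setA_finite n
  have hU := setA_union hn
  have hsub : ∀ S : Set (List ℕ), S ⊆ SetA n → S.Finite := fun S hS => hfin.subset hS
  have hA1 : (A1 n).Finite := hsub _ (fun L hL => hL.1)
  have hB0 : (B0 n).Finite := hsub _ (fun L hL => hL.1)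
  have hB1 : (B1 n).Finite := hsub _ (fun L hL => hL.1)
  have hBD : (BD n).Finite := hsub _ (fun L hL => hL.1)
  have hB3 : (B3 n).Finite := hsub _ (fun L hL => hL.1)
  have d1 : Disjoint (A1 n) (B0 n) := by
    rw [Set.disjoint_left]; rintro L ⟨_, h1⟩ ⟨_, h2, _⟩; omega
  have d2 : Disjoint (A1 n ∪ B0 n) (B1 n) := by
    rw [Set.disjoint_left]
    rintro L (⟨_, h1⟩ | ⟨_, _, h1⟩) ⟨_, h2, h3⟩ <;> omega
  have d3 : Disjoint (A1 n ∪ B0 n ∪ B1 n) (BD n) := by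
    rw [Set.disjoint_left]
    rintro L ((⟨_, h1⟩ | ⟨_, _, h1⟩) | ⟨_, _, h1⟩) ⟨_, h2, h3⟩ <;> omega
  have d4 : Disjoint (A1 n ∪ B0 n ∪ B1 n ∪ BD n) (B3 n) := by
    rw [Set.disjoint_left]
    rintro L (((⟨_, h1⟩ | ⟨_, _, h1⟩) | ⟨_, _, h1⟩) | ⟨_, h1, _⟩) ⟨_, h2, h3⟩ <;> omega
  rw [hU, Set.ncard_union_eq d4 (((hA1.union hB0).union hB1).union hBD) hB3,
    Set.ncard_union_eq d3 ((hA1.union hB0).union hB1) hBD,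
    Set.ncard_union_eq d2 (hA1.union hB0) hB1,
    Set.ncard_union_eq d1 hA1 hB0,
    A1_eq hn, Set.ncard_singleton]
  rcases em (3 ∣ n) with h | h
  · rw [B3_eq_dvd hn h, Set.ncard_singleton, if_pos h]
  · rw [B3_eq_not_dvd h, Set.ncard_empty, if_neg h]

lemma C0_ncard {n : ℕ} : (C0 n).ncard = (B0 n).ncard := by
  rw [← Set.BijOn.image_eq (bij0 (n := n))]
  exact Set.ncard_image_of_injOn bij0.injOn

lemma C1_ncard {n : ℕ} : (C1 n).ncard = (B1 n).ncard := by
  rw [← Set.BijOn.image_eq (bij1 (n := n))]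
  exact Set.ncard_image_of_injOn bij1.injOn

lemma CD_ncard {n : ℕ} : (CD n).ncard = (BD n).ncard := by
  rw [← Set.BijOn.image_eq (bijD (n := n))]
  exact Set.ncard_image_of_injOn bijD.injOn


/-! ### psize lemmas -/

lemma chain'_iff {L : List ℕ} : L.Chain' (· > ·) ↔ Srt L := List.isChain_iff_pairwise

lemma zip_ones : ∀ L : List ℕ, (List.zipWith (· * ·) L (List.replicate L.length 1)).sum = L.sum
  | [] => rfl
  | a :: l => by
    simp only [List.length_cons, List.replicate_succ, List.zipWith_cons_cons, List.sum_cons,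
      zip_ones l, mul_one]

lemma psize_ones (L : List ℕ) : psize (L, List.replicate L.length 1) = L.sum := zip_ones L

lemma psize_head2 (a : ℕ) (T : List ℕ) :
    psize (a :: T, 2 :: List.replicate T.length 1) = a + (a :: T).sum := by
  simp only [psize, List.zipWith_cons_cons, List.sum_cons, zip_ones T]
  ring

lemma psize_last2 (L : List ℕ) (h : L ≠ []) :
    psize (L, List.replicate (L.length - 1) 1 ++ [2]) = L.sum + partsLast L := by
  obtain ⟨l, x, rfl⟩ := (List.eq_nil_or_concat L).resolve_left h
  simp only [List.concat_eq_append] at *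
  have hlen : l.length = (l ++ [x]).length - 1 := by simp
  simp only [psize, ← hlen]
  rw [List.zipWith_append (by simp)]
  simp [zip_ones l, partsLast, List.getLastD_concat]
  ring

lemma psize_both2 (a : ℕ) (T : List ℕ) (h : T ≠ []) :
    psize (a :: T, 2 :: (List.replicate (T.length - 1) 1 ++ [2])) =
      a + (a :: T).sum + partsLast T := by
  have := psize_last2 T h
  simp only [psize, List.zipWith_cons_cons, List.sum_cons] at *
  rw [this]
  ring

/-! ### multiplicity list reconstruction -/

lemma K0_eq {L K : List ℕ} (hlen : L.length = K.length) (h2 : 2 ≤ L.length)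
    (hhead : K.headD 0 = 2) (hones : ∀ k ∈ K.tail, k = 1) :
    K = 2 :: List.replicate (L.length - 1) 1 := by
  cases K with
  | nil => simp only [List.length_nil] at hlen; omega
  | cons k K' =>
    simp only [List.headD_cons] at hhead
    subst hhead
    have h1 : K' = List.replicate K'.length 1 := List.eq_replicate_iff.2 ⟨rfl, hones⟩
    have h2' : K'.length = L.length - 1 := by simp only [List.length_cons] at hlen; omega
    rw [← h2', ← h1]

lemma K1_eq {L K : List ℕ} (hlen : L.length = K.length) (h2 : 2 ≤ L.length)
    (hlast : K.getLastD 0 = 2) (hones : ∀ k ∈ K.dropLast, k = 1) :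
    K = List.replicate (L.length - 1) 1 ++ [2] := by
  have hne : K ≠ [] := by
    intro h; rw [h] at hlen; simp only [List.length_nil] at hlen; omega
  obtain ⟨Kd, x, rfl⟩ := (List.eq_nil_or_concat K).resolve_left hne
  simp only [List.concat_eq_append] at *
  rw [List.getLastD_concat] at hlast
  subst hlast
  rw [List.dropLast_concat] at hones
  have h1 : Kd = List.replicate Kd.length 1 := List.eq_replicate_iff.2 ⟨rfl, hones⟩
  have h2' : Kd.length = L.length - 1 := by simp at hlen ⊢; omega
  rw [← h2', ← h1]

lemma KD_eq {L K : List ℕ} (hlen : L.length = K.length) (h2 : 2 ≤ L.length)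
    (hhead : K.headD 0 = 2) (hlast : K.getLastD 0 = 2)
    (hones : ∀ k ∈ K.tail.dropLast, k = 1) :
    K = 2 :: (List.replicate (L.length - 2) 1 ++ [2]) := by
  cases K with
  | nil => simp only [List.length_nil] at hlen; omega
  | cons k K' =>
    simp only [List.headD_cons] at hhead
    subst hhead
    have hne : K' ≠ [] := by
      intro h; rw [h] at hlen; simp only [List.length_cons, List.length_nil] at hlen; omega
    obtain ⟨l, x, rfl⟩ := (List.eq_nil_or_concat K').resolve_left hne
    simp only [List.concat_eq_append] at *
    have : partsLast (2 :: (l ++ [x])) = x := by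
      rw [partsLast_cons (by simp) 2, partsLast_concat]
    rw [show ((2 :: (l ++ [x])).getLastD 0) = partsLast (2 :: (l ++ [x])) from rfl, this] at hlast
    subst hlast
    simp only [List.tail_cons, List.dropLast_concat] at hones
    have h1 : l = List.replicate l.length 1 := List.eq_replicate_iff.2 ⟨rfl, hones⟩
    have h2' : l.length = L.length - 2 := by simp at hlen ⊢; omega
    rw [← h2', ← h1]

/-! ### pair-level reductions -/

lemma P_all_ncard {n : ℕ} :
    {p : List ℕ × List ℕ | IsPart p ∧ psize p = n ∧ ∀ k ∈ p.2, k = 1}.ncard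
      = (SetA n).ncard := by
  have hbij : Set.BijOn Prod.fst
      {p : List ℕ × List ℕ | IsPart p ∧ psize p = n ∧ ∀ k ∈ p.2, k = 1} (SetA n) := by
    refine ⟨?_, ?_, ?_⟩
    · rintro ⟨L, K⟩ ⟨⟨hlen, hch, hpL, hpK⟩, hsize, hones⟩
      have hK : K = List.replicate L.length 1 :=
        List.eq_replicate_iff.2 ⟨hlen.symm, hones⟩
      refine ⟨chain'_iff.1 hch, hpL, ?_⟩
      rw [← psize_ones L, ← hK]
      exact hsize
    · rintro ⟨L, K⟩ ⟨⟨hlen, _, _, _⟩, _, hones⟩ ⟨L', K'⟩ ⟨⟨hlen', _, _, _⟩, _, hones'⟩ h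
      simp only at h
      subst h
      have hK : K = List.replicate L.length 1 := List.eq_replicate_iff.2 ⟨hlen.symm, hones⟩
      have hK' : K' = List.replicate L.length 1 := List.eq_replicate_iff.2 ⟨hlen'.symm, hones'⟩
      simp [Prod.ext_iff, hK, hK']
    · rintro L ⟨hs, hp, hsum⟩
      refine ⟨(L, List.replicate L.length 1), ⟨⟨by simp, chain'_iff.2 hs, hp, ?_⟩, ?_, ?_⟩, rfl⟩
      · intro k hk; rw [List.eq_of_mem_replicate hk]; norm_num
      · rw [psize_ones]; exact hsum
      · intro k hk; exact List.eq_of_mem_replicate hk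
  rw [← hbij.image_eq, Set.ncard_image_of_injOn hbij.injOn]

lemma P0_ncard {n : ℕ} :
    {p : List ℕ × List ℕ | IsPart p ∧ 2 ≤ p.1.length ∧ psize p = n ∧
      p.2.headD 0 = 2 ∧ ∀ k ∈ p.2.tail, k = 1}.ncard = (C0 n).ncard := by
  have hbij : Set.BijOn Prod.fst
      {p : List ℕ × List ℕ | IsPart p ∧ 2 ≤ p.1.length ∧ psize p = n ∧
        p.2.headD 0 = 2 ∧ ∀ k ∈ p.2.tail, k = 1} (C0 n) := by
    refine ⟨?_, ?_, ?_⟩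
    · rintro ⟨L, K⟩ ⟨⟨hlen, hch, hpL, hpK⟩, hl2, hsize, hhead, hones⟩
      have hK : K = 2 :: List.replicate (L.length - 1) 1 := K0_eq hlen hl2 hhead hones
      obtain ⟨a, b, t, rfl⟩ := exists2 hl2
      refine ⟨chain'_iff.1 hch, hpL, hl2, ?_⟩
      rw [hK] at hsize
      have h1 : (a :: b :: t).length - 1 = (b :: t).length := by simp
      rw [h1, psize_head2] at hsize
      simpa using hsize
    · rintro ⟨L, K⟩ ⟨⟨hlen, _, _, _⟩, hl2, _, hh, ho⟩ ⟨L', K'⟩ ⟨⟨hlen', _, _, _⟩, hl2', _, hh', ho'⟩ h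
      simp only at h
      subst h
      have hK : K = 2 :: List.replicate (L.length - 1) 1 := K0_eq hlen hl2 hh ho
      have hK' : K' = 2 :: List.replicate (L.length - 1) 1 := K0_eq hlen' hl2' hh' ho'
      simp only [Prod.mk.injEq]
      exact ⟨trivial, hK.trans hK'.symm⟩
    · rintro L ⟨hs, hp, hl2, hsum⟩
      obtain ⟨a, b, t, rfl⟩ := exists2 hl2
      have h1 : (a :: b :: t).length - 1 = (b :: t).length := by simp
      refine ⟨(a :: b :: t, 2 :: List.replicate (b :: t).length 1),
        ⟨⟨by simp, chain'_iff.2 hs, hp, ?_⟩, hl2, ?_, rfl, ?_⟩, rfl⟩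
      · intro k hk
        rcases List.mem_cons.1 hk with rfl | hk
        · norm_num
        · rw [List.eq_of_mem_replicate hk]; norm_num
      · rw [psize_head2]; simpa using hsum
      · intro k hk; exact List.eq_of_mem_replicate hk
  rw [← hbij.image_eq, Set.ncard_image_of_injOn hbij.injOn]

lemma P1_ncard {n : ℕ} :
    {p : List ℕ × List ℕ | IsPart p ∧ 2 ≤ p.1.length ∧ psize p = n ∧
      p.2.getLastD 0 = 2 ∧ ∀ k ∈ p.2.dropLast, k = 1}.ncard = (C1 n).ncard := by
  have hbij : Set.BijOn Prod.fst
      {p : List ℕ × List ℕ | IsPart p ∧ 2 ≤ p.1.length ∧ psize p = n ∧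
        p.2.getLastD 0 = 2 ∧ ∀ k ∈ p.2.dropLast, k = 1} (C1 n) := by
    refine ⟨?_, ?_, ?_⟩
    · rintro ⟨L, K⟩ ⟨⟨hlen, hch, hpL, hpK⟩, hl2, hsize, hlast, hones⟩
      have hK : K = List.replicate (L.length - 1) 1 ++ [2] := K1_eq hlen hl2 hlast hones
      have hLne : L ≠ [] := by intro h; rw [h] at hl2; simp at hl2
      refine ⟨chain'_iff.1 hch, hpL, hl2, ?_⟩
      rw [hK, psize_last2 L hLne] at hsize
      exact hsize
    · rintro ⟨L, K⟩ ⟨⟨hlen, _, _, _⟩, hl2, _, hh, ho⟩ ⟨L', K'⟩ ⟨⟨hlen', _, _, _⟩, hl2', _, hh', ho'⟩ h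
      simp only at h
      subst h
      have hK : K = List.replicate (L.length - 1) 1 ++ [2] := K1_eq hlen hl2 hh ho
      have hK' : K' = List.replicate (L.length - 1) 1 ++ [2] := K1_eq hlen' hl2' hh' ho'
      simp only [Prod.mk.injEq]
      exact ⟨trivial, hK.trans hK'.symm⟩
    · rintro L ⟨hs, hp, hl2, hsum⟩
      have hLne : L ≠ [] := by intro h; rw [h] at hl2; simp at hl2
      refine ⟨(L, List.replicate (L.length - 1) 1 ++ [2]),
        ⟨⟨?_, chain'_iff.2 hs, hp, ?_⟩, hl2, ?_, ?_, ?_⟩, rfl⟩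
      · simp
        cases L with
        | nil => simp at hl2
        | cons a l => simp
      · intro k hk
        rcases List.mem_append.1 hk with hk | hk
        · rw [List.eq_of_mem_replicate hk]; norm_num
        · simp at hk; omega
      · rw [psize_last2 L hLne]; exact hsum
      · rw [List.getLastD_concat]
      · rw [List.dropLast_concat]
        intro k hk; exact List.eq_of_mem_replicate hk
  rw [← hbij.image_eq, Set.ncard_image_of_injOn hbij.injOn]

lemma PD_ncard {n : ℕ} :
    {p : List ℕ × List ℕ | IsPart p ∧ 2 ≤ p.1.length ∧ psize p = n ∧
      p.2.headD 0 = 2 ∧ p.2.getLastD 0 = 2 ∧ ∀ k ∈ p.2.tail.dropLast, k = 1}.ncard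
      = (CD n).ncard := by
  have hbij : Set.BijOn Prod.fst
      {p : List ℕ × List ℕ | IsPart p ∧ 2 ≤ p.1.length ∧ psize p = n ∧
        p.2.headD 0 = 2 ∧ p.2.getLastD 0 = 2 ∧ ∀ k ∈ p.2.tail.dropLast, k = 1} (CD n) := by
    refine ⟨?_, ?_, ?_⟩
    · rintro ⟨L, K⟩ ⟨⟨hlen, hch, hpL, hpK⟩, hl2, hsize, hhead, hlast, hones⟩
      have hK : K = 2 :: (List.replicate (L.length - 2) 1 ++ [2]) :=
        KD_eq hlen hl2 hhead hlast hones
      obtain ⟨a, b, t, rfl⟩ := exists2 hl2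
      have hTne : (b :: t) ≠ [] := by simp
      have h1 : (a :: b :: t).length - 2 = (b :: t).length - 1 := by simp
      refine ⟨chain'_iff.1 hch, hpL, hl2, ?_⟩
      rw [hK, h1, psize_both2 a (b :: t) hTne] at hsize
      rw [show partsLast (a :: b :: t) = partsLast (b :: t) from partsLast_cons hTne a]
      simpa using hsize
    · rintro ⟨L, K⟩ ⟨⟨hlen, _, _, _⟩, hl2, _, hh, hl, ho⟩
        ⟨L', K'⟩ ⟨⟨hlen', _, _, _⟩, hl2', _, hh', hl', ho'⟩ h
      simp only at h
      subst h
      have hK : K = 2 :: (List.replicate (L.length - 2) 1 ++ [2]) := KD_eq hlen hl2 hh hl ho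
      have hK' : K' = 2 :: (List.replicate (L.length - 2) 1 ++ [2]) := KD_eq hlen' hl2' hh' hl' ho'
      simp only [Prod.mk.injEq]
      exact ⟨trivial, hK.trans hK'.symm⟩
    · rintro L ⟨hs, hp, hl2, hsum⟩
      obtain ⟨a, b, t, rfl⟩ := exists2 hl2
      have hTne : (b :: t) ≠ [] := by simp
      refine ⟨(a :: b :: t, 2 :: (List.replicate ((b :: t).length - 1) 1 ++ [2])),
        ⟨⟨by simp, chain'_iff.2 hs, hp, ?_⟩, hl2, ?_, rfl, ?_, ?_⟩, rfl⟩
      · intro k hk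
        rcases List.mem_cons.1 hk with rfl | hk
        · norm_num
        · rcases List.mem_append.1 hk with hk | hk
          · rw [List.eq_of_mem_replicate hk]; norm_num
          · simp at hk; omega
      · rw [psize_both2 a (b :: t) hTne]
        rw [show partsLast (a :: b :: t) = partsLast (b :: t) from partsLast_cons hTne a] at hsum
        simpa using hsum
      · rw [show ((2 :: (List.replicate ((b :: t).length - 1) 1 ++ [2])).getLastD 0)
          = partsLast (2 :: (List.replicate ((b :: t).length - 1) 1 ++ [2])) from rfl,
          partsLast_cons (by simp) 2, partsLast_concat]
      · simp only [List.tail_cons, List.dropLast_concat]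
        intro k hk; exact List.eq_of_mem_replicate hk
  rw [← hbij.image_eq, Set.ncard_image_of_injOn hbij.injOn]

end S17

theorem stmt17 (n : ℕ) (hn : 0 < n) :
    {p : List ℕ × List ℕ | IsPart p ∧ psize p = n ∧ ∀ k ∈ p.2, k = 1}.ncard =
      1 +
      {p : List ℕ × List ℕ | IsPart p ∧ 2 ≤ p.1.length ∧ psize p = n ∧
        p.2.headD 0 = 2 ∧ ∀ k ∈ p.2.tail, k = 1}.ncard +
      {p : List ℕ × List ℕ | IsPart p ∧ 2 ≤ p.1.length ∧ psize p = n ∧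
        p.2.getLastD 0 = 2 ∧ ∀ k ∈ p.2.dropLast, k = 1}.ncard +
      {p : List ℕ × List ℕ | IsPart p ∧ 2 ≤ p.1.length ∧ psize p = n ∧
        p.2.headD 0 = 2 ∧ p.2.getLastD 0 = 2 ∧ ∀ k ∈ p.2.tail.dropLast, k = 1}.ncard +
      (if 3 ∣ n then 1 else 0) := by
  rw [S17.P_all_ncard, S17.P0_ncard, S17.P1_ncard, S17.PD_ncard,
    S17.C0_ncard, S17.C1_ncard, S17.CD_ncard, S17.setA_ncard hn]
end
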